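/- arXiv:1112.0228 — 5 statements merged into one kernel-verified Lean document; each statement's English description precedes it below -/
import Mathlib

section
/- Let G be a semispray on ℝⁿ, let c : I → ℝⁿ be a geodesic of G, let V : I × (−ε,ε)^k → ℝⁿ be a k-parameter geodesic variation of c (k ≥ 2), and fix indices a, b ∈ {1,…,k}. Set j₁(t) = ∂_{s^a}V(t,0,…,0), j₂(t) = ∂_{s^b}V(t,0,…,0) and w(t) = ∂_{s^a}∂_{s^b}V(t,0,…,0). Then for all t ∈ I: w''(t) + 2·D_xG(c(t),c'(t))·w(t) + 2·D_yG(c(t),c'(t))·w'(t) + 2·D²G(c(t),c'(t))[(j₁(t), j₁'(t)), (j₂(t), j₂'(t))] = 0, where D²G(x,y) denotes the second Fréchet derivative of G at (x,y), a symmetric bilinear map (ℝⁿ × ℝⁿ)² → ℝⁿ. -/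
noncomputable section

/-- Euclidean coordinate space `ℝⁿ`. -/
abbrev En (n : ℕ) : Type := Fin n → ℝ

/-- A semispray on `ℝⁿ` in coordinates: a map `G : ℝⁿ × (ℝⁿ ∖ {0}) → ℝⁿ` that is
`C^∞` on the set where the second (velocity) variable is nonzero. -/
def IsSemispray (n : ℕ) (G : En n × En n → En n) : Prop :=
  ContDiffOn ℝ (⊤ : ℕ∞) G {p : En n × En n | p.2 ≠ 0}

/-- A spray: a semispray that is positively `2`-homogeneous in the velocity variable. -/
def IsSpray (n : ℕ) (G : En n × En n → En n) : Prop :=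
  IsSemispray n G ∧
    ∀ (x y : En n), y ≠ 0 → ∀ l : ℝ, 0 < l → G (x, l • y) = l ^ 2 • G (x, y)

/-- `c` is a geodesic of the semispray `G` on the set `I`:
`c` is `C^∞` on `I`, regular, and `c'' + 2 G(c, c') = 0` on `I`. -/
def IsGeodesicOn (n : ℕ) (G : En n × En n → En n) (c : ℝ → En n) (I : Set ℝ) : Prop :=
  ContDiffOn ℝ (⊤ : ℕ∞) c I ∧ (∀ t ∈ I, deriv c t ≠ 0) ∧
    ∀ t ∈ I, deriv (deriv c) t + (2 : ℝ) • G (c t, deriv c t) = 0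

/-- Partial Fréchet derivative of `G` in its first (base) variable. -/
def DxG (n : ℕ) (G : En n × En n → En n) (x y : En n) : En n →L[ℝ] En n :=
  fderiv ℝ (fun x' => G (x', y)) x

/-- Partial Fréchet derivative of `G` in its second (velocity) variable. -/
def DyG (n : ℕ) (G : En n × En n → En n) (x y : En n) : En n →L[ℝ] En n :=
  fderiv ℝ (fun y' => G (x, y')) y

/-- `N(t) = D_yG(c(t), c'(t))` along a curve `c`. -/
def Nc (n : ℕ) (G : En n × En n → En n) (c : ℝ → En n) (t : ℝ) : En n →L[ℝ] En n :=
  DyG n G (c t) (deriv c t)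

/-- Dynamical covariant derivative `∇v = v' + N·v` of a vector field `v` along `c`. -/
def covV (n : ℕ) (G : En n × En n → En n) (c : ℝ → En n) (v : ℝ → En n) (t : ℝ) : En n :=
  deriv v t + Nc n G c t (v t)

/-- Dynamical covariant derivative `∇J = J' + N∘J − J∘N` of an endomorphism field `J`
along `c`. -/
def covE (n : ℕ) (G : En n × En n → En n) (c : ℝ → En n)
    (J : ℝ → En n →L[ℝ] En n) (t : ℝ) : En n →L[ℝ] En n :=
  deriv J t + (Nc n G c t).comp (J t) - (J t).comp (Nc n G c t)

/-- Jacobi endomorphism `Φ = 2 D_xG(c,c') − N' − N∘N` along `c`. -/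
def Phi (n : ℕ) (G : En n × En n → En n) (c : ℝ → En n) (t : ℝ) : En n →L[ℝ] En n :=
  (2 : ℝ) • DxG n G (c t) (deriv c t) - deriv (fun t' => Nc n G c t') t
    - (Nc n G c t).comp (Nc n G c t)

/-- A parallel vector field along `c` on `I`: `∇v = v' + N·v = 0`. -/
def IsParallel (n : ℕ) (G : En n × En n → En n) (c : ℝ → En n) (I : Set ℝ)
    (v : ℝ → En n) : Prop :=
  ContDiffOn ℝ (⊤ : ℕ∞) v I ∧ ∀ t ∈ I, deriv v t + Nc n G c t (v t) = 0

/-- A Jacobi field along a geodesic `c` on `I`: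
`j'' + 2 D_yG(c,c')·j' + 2 D_xG(c,c')·j = 0`. -/
def IsJacobiField (n : ℕ) (G : En n × En n → En n) (c : ℝ → En n) (I : Set ℝ)
    (j : ℝ → En n) : Prop :=
  ContDiffOn ℝ (⊤ : ℕ∞) j I ∧ ∀ t ∈ I,
    deriv (deriv j) t + (2 : ℝ) • DyG n G (c t) (deriv c t) (deriv j t)
      + (2 : ℝ) • DxG n G (c t) (deriv c t) (j t) = 0

/-- A Jacobi tensor along `c` on `I`: a `C^∞` endomorphism field with `∇²J + Φ∘J = 0`. -/
def IsJacobiTensor (n : ℕ) (G : En n × En n → En n) (c : ℝ → En n) (I : Set ℝ)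
    (J : ℝ → En n →L[ℝ] En n) : Prop :=
  ContDiffOn ℝ (⊤ : ℕ∞) J I ∧ ∀ t ∈ I,
    covE n G c (fun t' => covE n G c J t') t + (Phi n G c t).comp (J t) = 0

/-- The open cube `(−ε, ε)^k`. -/
def cube (k : ℕ) (ε : ℝ) : Set (Fin k → ℝ) := {s | ∀ i, |s i| < ε}

/-- A `k`-parameter geodesic variation of the geodesic `c` on `I`:
a `C^∞` map `V : I × (−ε,ε)^k → ℝⁿ` with `V(t,0) = c(t)` and every `t ↦ V(t,s)`
a geodesic of `G` on `I`. -/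
def IsGeodesicVariation (n : ℕ) (G : En n × En n → En n) (c : ℝ → En n) (I : Set ℝ)
    (k : ℕ) (ε : ℝ) (V : ℝ × (Fin k → ℝ) → En n) : Prop :=
  ContDiffOn ℝ (⊤ : ℕ∞) V (I ×ˢ cube k ε) ∧ (∀ t ∈ I, V (t, 0) = c t) ∧
    ∀ s ∈ cube k ε, IsGeodesicOn n G (fun t => V (t, s)) I

/-- `∂_{s^a} V (t, 0)`: the variation vector field in direction `a` along the base curve. -/
def dS (n k : ℕ) (V : ℝ × (Fin k → ℝ) → En n) (a : Fin k) (t : ℝ) : En n :=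
  fderiv ℝ (fun s => V (t, s)) 0 (Pi.single a 1)

/-- `∂_{s^a} ∂_{s^b} V (t, 0)`: the second mixed variation field. -/
def dS2 (n k : ℕ) (V : ℝ × (Fin k → ℝ) → En n) (a b : Fin k) (t : ℝ) : En n :=
  fderiv ℝ (fun s => fderiv ℝ (fun s' => V (t, s')) s (Pi.single b 1)) 0 (Pi.single a 1)

section Aux

open Filter

variable {E F S : Type*} [NormedAddCommGroup E] [NormedSpace ℝ E]
  [NormedAddCommGroup F] [NormedSpace ℝ F]
  [NormedAddCommGroup S] [NormedSpace ℝ S]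

/-- Directional derivative. -/
def Dv (f : E → F) (v : E) (x : E) : F := fderiv ℝ f x v

theorem fderiv_smoothOn {f : E → F} {U : Set E} (hU : IsOpen U)
    (hf : ContDiffOn ℝ (⊤ : ℕ∞) f U) :
    ContDiffOn ℝ (⊤ : ℕ∞) (fun x => fderiv ℝ f x) U := by
  have h := hf.fderivWithin hU.uniqueDiffOn (m := (⊤ : ℕ∞)) (by exact_mod_cast le_top)
  exact h.congr fun x hx => (fderivWithin_of_isOpen hU hx).symm

theorem Dv_smoothOn {f : E → F} {U : Set E} (hU : IsOpen U)
    (hf : ContDiffOn ℝ (⊤ : ℕ∞) f U) (v : E) :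
    ContDiffOn ℝ (⊤ : ℕ∞) (Dv f v) U :=
  (fderiv_smoothOn hU hf).clm_apply contDiffOn_const

theorem diffAt_of_smoothOn {f : E → F} {U : Set E} (hU : IsOpen U)
    (hf : ContDiffOn ℝ (⊤ : ℕ∞) f U) {x : E} (hx : x ∈ U) :
    DifferentiableAt ℝ f x :=
  (hf.differentiableOn (by simp)).differentiableAt (hU.mem_nhds hx)

theorem fderiv_diffAt {f : E → F} {U : Set E} (hU : IsOpen U)
    (hf : ContDiffOn ℝ (⊤ : ℕ∞) f U) {x : E} (hx : x ∈ U) :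
    DifferentiableAt ℝ (fun y => fderiv ℝ f y) x :=
  diffAt_of_smoothOn hU (fderiv_smoothOn hU hf) hx

theorem Dv_hasFDerivAt {f : E → F} {U : Set E} (hU : IsOpen U)
    (hf : ContDiffOn ℝ (⊤ : ℕ∞) f U) (v : E) {x : E} (hx : x ∈ U) :
    HasFDerivAt (Dv f v) ((fderiv ℝ (fun y => fderiv ℝ f y) x).flip v) x := by
  have h1 : HasFDerivAt (fun y => fderiv ℝ f y) (fderiv ℝ (fun y => fderiv ℝ f y) x) x :=
    (fderiv_diffAt hU hf hx).hasFDerivAt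
  have := h1.clm_apply (hasFDerivAt_const v x)
  simp at this
  exact this

theorem Dv_schwarz {f : E → F} {U : Set E} (hU : IsOpen U)
    (hf : ContDiffOn ℝ (⊤ : ℕ∞) f U) {x : E} (hx : x ∈ U) (v w : E) :
    Dv (Dv f v) w x = Dv (Dv f w) v x := by
  have hsym := second_derivative_symmetric_of_eventually (f := f)
    (f' := fun y => fderiv ℝ f y) (f'' := fderiv ℝ (fun y => fderiv ℝ f y) x) (x := x)
    (by filter_upwards [hU.mem_nhds hx] with y hy using
      (diffAt_of_smoothOn hU hf hy).hasFDerivAt)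
    ((fderiv_diffAt hU hf hx).hasFDerivAt)
  have h1 := (Dv_hasFDerivAt hU hf v hx).fderiv
  have h2 := (Dv_hasFDerivAt hU hf w hx).fderiv
  show fderiv ℝ (Dv f v) x w = fderiv ℝ (Dv f w) x v
  rw [h1, h2]
  simpa using hsym w v

theorem Dv_congr {f g : E → F} {U : Set E} (hU : IsOpen U)
    (h : ∀ y ∈ U, f y = g y) {x : E} (hx : x ∈ U) (v : E) :
    Dv f v x = Dv g v x := by
  show fderiv ℝ f x v = fderiv ℝ g x v
  rw [Filter.EventuallyEq.fderiv_eq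
    (by filter_upwards [hU.mem_nhds hx] with y hy using h y hy)]

theorem slice_hasDerivAt {h : ℝ × S → F} {U : Set (ℝ × S)} (hU : IsOpen U)
    (hh : ContDiffOn ℝ (⊤ : ℕ∞) h U) {t : ℝ} {s : S} (hx : (t, s) ∈ U) :
    HasDerivAt (fun t' => h (t', s)) (Dv h (1, 0) (t, s)) t := by
  have hd := (diffAt_of_smoothOn hU hh hx).hasFDerivAt
  have hgam : HasDerivAt (fun t' : ℝ => (t', s)) ((1 : ℝ), (0 : S)) t :=
    HasDerivAt.prodMk (hasDerivAt_id t) (hasDerivAt_const t s)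
  simpa [Function.comp_def, Dv] using hd.comp_hasDerivAt t hgam

theorem slice_fderiv_apply {h : ℝ × S → F} {U : Set (ℝ × S)} (hU : IsOpen U)
    (hh : ContDiffOn ℝ (⊤ : ℕ∞) h U) {t : ℝ} {s : S} (hx : (t, s) ∈ U) (v : S) :
    fderiv ℝ (fun s' => h (t, s')) s v = Dv h (0, v) (t, s) := by
  have hd := (diffAt_of_smoothOn hU hh hx).hasFDerivAt
  have hgam : HasFDerivAt (fun s' : S => (t, s'))
      ((0 : S →L[ℝ] ℝ).prod (ContinuousLinearMap.id ℝ S)) s :=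
    HasFDerivAt.prodMk (hasFDerivAt_const t s) (hasFDerivAt_id s)
  have hc : HasFDerivAt (fun s' => h (t, s'))
      ((fderiv ℝ h (t, s)).comp ((0 : S →L[ℝ] ℝ).prod (ContinuousLinearMap.id ℝ S))) s := by
    simpa [Function.comp_def] using hd.comp s hgam
  rw [hc.fderiv]
  simp [Dv]

end Aux

theorem isOpen_Omega (n : ℕ) : IsOpen {p : En n × En n | p.2 ≠ 0} := by
  have : {p : En n × En n | p.2 ≠ 0} = Prod.snd ⁻¹' {(0 : En n)}ᶜ := rfl
  rw [this]
  exact isOpen_compl_singleton.preimage continuous_snd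

theorem fderivG_split (n : ℕ) (G : En n × En n → En n) (hG : IsSemispray n G)
    {x y : En n} (hy : y ≠ 0) (u v : En n) :
    fderiv ℝ G (x, y) (u, v) = DxG n G x y u + DyG n G x y v := by
  have hGd : DifferentiableAt ℝ G (x, y) :=
    diffAt_of_smoothOn (isOpen_Omega n) hG hy
  have hx' : HasFDerivAt (fun x' => G (x', y))
      ((fderiv ℝ G (x, y)).comp
        ((ContinuousLinearMap.id ℝ (En n)).prod (0 : En n →L[ℝ] En n))) x := by
    have hgam : HasFDerivAt (fun x' : En n => (x', y))
        ((ContinuousLinearMap.id ℝ (En n)).prod (0 : En n →L[ℝ] En n)) x :=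
      HasFDerivAt.prodMk (hasFDerivAt_id x) (hasFDerivAt_const y x)
    simpa [Function.comp_def] using hGd.hasFDerivAt.comp x hgam
  have hy' : HasFDerivAt (fun y' => G (x, y'))
      ((fderiv ℝ G (x, y)).comp
        ((0 : En n →L[ℝ] En n).prod (ContinuousLinearMap.id ℝ (En n)))) y := by
    have hgam : HasFDerivAt (fun y' : En n => (x, y'))
        ((0 : En n →L[ℝ] En n).prod (ContinuousLinearMap.id ℝ (En n))) y :=
      HasFDerivAt.prodMk (hasFDerivAt_const x y) (hasFDerivAt_id y)
    simpa [Function.comp_def] using hGd.hasFDerivAt.comp y hgam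
  have h1 : DxG n G x y u = fderiv ℝ G (x, y) (u, 0) := by
    rw [DxG, hx'.fderiv]; simp
  have h2 : DyG n G x y v = fderiv ℝ G (x, y) (0, v) := by
    rw [DyG, hy'.fderiv]; simp
  rw [h1, h2, ← ContinuousLinearMap.map_add]
  congr 1
  simp

/-- The second mixed variation field `w = ∂_{s^a}∂_{s^b}V(t,0,…,0)` of a `k`-parameter
geodesic variation satisfies the geodesic equation of the second iterated complete lift:
`w'' + 2 D_xG(c,c')·w + 2 D_yG(c,c')·w' + 2 D²G(c,c')[(j₁,j₁'),(j₂,j₂')] = 0`,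
where `j₁ = ∂_{s^a}V(·,0)` and `j₂ = ∂_{s^b}V(·,0)`. -/
theorem second_variation_field_equation (n k : ℕ) (hn : 1 ≤ n) (hk : 2 ≤ k)
    (G : En n × En n → En n) (hG : IsSemispray n G)
    (I : Set ℝ) (hIopen : IsOpen I) (hIconn : I.OrdConnected)
    (c : ℝ → En n) (hc : IsGeodesicOn n G c I)
    (ε : ℝ) (hε : 0 < ε) (V : ℝ × (Fin k → ℝ) → En n)
    (hV : IsGeodesicVariation n G c I k ε V) (a b : Fin k) :
    ∀ t ∈ I,
      deriv (deriv (dS2 n k V a b)) t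
        + (2 : ℝ) • DxG n G (c t) (deriv c t) (dS2 n k V a b t)
        + (2 : ℝ) • DyG n G (c t) (deriv c t) (deriv (dS2 n k V a b) t)
        + (2 : ℝ) • fderiv ℝ (fun p => fderiv ℝ G p) (c t, deriv c t)
            (dS n k V a t, deriv (dS n k V a) t)
            (dS n k V b t, deriv (dS n k V b) t) = 0 := by
  classical
  obtain ⟨hVsm, hV0, hVgeo⟩ := hV
  -- open sets
  have hcube : IsOpen (cube k ε) := by
    have hc : cube k ε = ⋂ i, (fun s : Fin k → ℝ => s i) ⁻¹' Set.Ioo (-ε) ε := by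
      ext s
      simp [cube, abs_lt, Set.mem_iInter]
    rw [hc]
    exact isOpen_iInter_of_finite fun i => (isOpen_Ioo).preimage (continuous_apply i)
  have hU : IsOpen (I ×ˢ cube k ε) := hIopen.prod hcube
  set U : Set (ℝ × (Fin k → ℝ)) := I ×ˢ cube k ε with hUdef
  have h0c : (0 : Fin k → ℝ) ∈ cube k ε := fun i => by simpa using hε
  set e0 : ℝ × (Fin k → ℝ) := (1, 0) with he0
  set va : ℝ × (Fin k → ℝ) := (0, Pi.single a 1) with hva
  set vb : ℝ × (Fin k → ℝ) := (0, Pi.single b 1) with hvb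
  -- smoothness of iterated directional derivatives of V on U
  have hA : ContDiffOn ℝ (⊤ : ℕ∞) (Dv V e0) U := Dv_smoothOn hU hVsm e0
  have hAe : ContDiffOn ℝ (⊤ : ℕ∞) (Dv (Dv V e0) e0) U := Dv_smoothOn hU hA e0
  have hAeb : ContDiffOn ℝ (⊤ : ℕ∞) (Dv (Dv (Dv V e0) e0) vb) U := Dv_smoothOn hU hAe vb
  have hVb : ContDiffOn ℝ (⊤ : ℕ∞) (Dv V vb) U := Dv_smoothOn hU hVsm vb
  have hVa : ContDiffOn ℝ (⊤ : ℕ∞) (Dv V va) U := Dv_smoothOn hU hVsm va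
  have hVba : ContDiffOn ℝ (⊤ : ℕ∞) (Dv (Dv V vb) va) U := Dv_smoothOn hU hVb va
  have hVbe : ContDiffOn ℝ (⊤ : ℕ∞) (Dv (Dv V vb) e0) U := Dv_smoothOn hU hVb e0
  have hVae : ContDiffOn ℝ (⊤ : ℕ∞) (Dv (Dv V va) e0) U := Dv_smoothOn hU hVa e0
  have hVbae : ContDiffOn ℝ (⊤ : ℕ∞) (Dv (Dv (Dv V vb) va) e0) U := Dv_smoothOn hU hVba e0
  have hAb : ContDiffOn ℝ (⊤ : ℕ∞) (Dv (Dv V e0) vb) U := Dv_smoothOn hU hA vb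
  have hAbv : ContDiffOn ℝ (⊤ : ℕ∞) (Dv (Dv (Dv V e0) vb) va) U := Dv_smoothOn hU hAb va
  -- the geodesic equation on U
  have hslice : ∀ t' : ℝ, ∀ s ∈ cube k ε, t' ∈ I →
      deriv (fun u => V (u, s)) t' = Dv V e0 (t', s) := by
    intro t' s hs ht'
    exact (slice_hasDerivAt hU hVsm (Set.mem_prod.2 ⟨ht', hs⟩)).deriv
  have hregU : ∀ x ∈ U, Dv V e0 x ≠ 0 := by
    rintro ⟨t, s⟩ hx
    obtain ⟨ht, hs⟩ := hx
    obtain ⟨hsm, hreg, heq⟩ := hVgeo s hs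
    have := hreg t ht
    rwa [hslice t s hs ht] at this
  have hgeoU : ∀ x ∈ U, Dv (Dv V e0) e0 x + (2 : ℝ) • G (V x, Dv V e0 x) = 0 := by
    rintro ⟨t, s⟩ hx
    obtain ⟨ht, hs⟩ := hx
    obtain ⟨hsm, hreg, heq⟩ := hVgeo s hs
    have h2 : deriv (deriv (fun u => V (u, s))) t = Dv (Dv V e0) e0 (t, s) := by
      have hee : deriv (fun u => V (u, s)) =ᶠ[nhds t] fun t' => Dv V e0 (t', s) := by
        filter_upwards [hIopen.mem_nhds ht] with t' ht' using hslice t' s hs ht'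
      rw [hee.deriv_eq]
      exact (slice_hasDerivAt hU hA (Set.mem_prod.2 ⟨ht, hs⟩)).deriv
    have h3 := heq t ht
    rw [hslice t s hs ht, h2] at h3
    exact h3
  have hOmega := isOpen_Omega n
  -- first differentiation of the geodesic equation, in direction vb
  have hstep1 : ∀ x ∈ U,
      Dv (Dv (Dv V e0) e0) vb x
        + (2 : ℝ) • (fderiv ℝ G (V x, Dv V e0 x)) (Dv V vb x, Dv (Dv V e0) vb x) = 0 := by
    intro x hx
    have hGd : DifferentiableAt ℝ G (V x, Dv V e0 x) :=
      diffAt_of_smoothOn hOmega hG (hregU x hx)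
    have hqd : HasFDerivAt (fun y => (V y, Dv V e0 y))
        ((fderiv ℝ V x).prod (fderiv ℝ (Dv V e0) x)) x :=
      HasFDerivAt.prodMk ((diffAt_of_smoothOn hU hVsm hx).hasFDerivAt)
        ((diffAt_of_smoothOn hU hA hx).hasFDerivAt)
    have hH : HasFDerivAt (fun y => Dv (Dv V e0) e0 y + (2 : ℝ) • G (V y, Dv V e0 y))
        ((fderiv ℝ (Dv (Dv V e0) e0) x)
          + (2 : ℝ) • ((fderiv ℝ G (V x, Dv V e0 x)).comp
              ((fderiv ℝ V x).prod (fderiv ℝ (Dv V e0) x)))) x :=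
      ((diffAt_of_smoothOn hU hAe hx).hasFDerivAt).add
        ((hGd.hasFDerivAt.comp x hqd).const_smul (2 : ℝ))
    have hH0 : HasFDerivAt (fun y => Dv (Dv V e0) e0 y + (2 : ℝ) • G (V y, Dv V e0 y))
        (0 : (ℝ × (Fin k → ℝ)) →L[ℝ] En n) x := by
      have hee : (fun y => Dv (Dv V e0) e0 y + (2 : ℝ) • G (V y, Dv V e0 y))
          =ᶠ[nhds x] fun _ => (0 : En n) := by
        filter_upwards [hU.mem_nhds hx] with y hy using hgeoU y hy
      exact (hasFDerivAt_const (0 : En n) x).congr_of_eventuallyEq hee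
    have heq0 := hH.unique hH0
    have happ := congrArg (fun L : (ℝ × (Fin k → ℝ)) →L[ℝ] En n => L vb) heq0
    simpa [Dv] using happ
  -- second differentiation, in direction va
  have hstep2 : ∀ x ∈ U,
      Dv (Dv (Dv (Dv V e0) e0) vb) va x
        + (2 : ℝ) • ((fderiv ℝ G (V x, Dv V e0 x))
              (Dv (Dv V vb) va x, Dv (Dv (Dv V e0) vb) va x)
            + (fderiv ℝ (fun p => fderiv ℝ G p) (V x, Dv V e0 x))
              (Dv V va x, Dv (Dv V e0) va x) (Dv V vb x, Dv (Dv V e0) vb x)) = 0 := by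
    intro x hx
    have hGd : DifferentiableAt ℝ G (V x, Dv V e0 x) :=
      diffAt_of_smoothOn hOmega hG (hregU x hx)
    have hG'd : DifferentiableAt ℝ (fun p => fderiv ℝ G p) (V x, Dv V e0 x) :=
      fderiv_diffAt hOmega hG (hregU x hx)
    have hqd : HasFDerivAt (fun y => (V y, Dv V e0 y))
        ((fderiv ℝ V x).prod (fderiv ℝ (Dv V e0) x)) x :=
      HasFDerivAt.prodMk ((diffAt_of_smoothOn hU hVsm hx).hasFDerivAt)
        ((diffAt_of_smoothOn hU hA hx).hasFDerivAt)
    have hB : HasFDerivAt (fun y => fderiv ℝ G (V y, Dv V e0 y))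
        ((fderiv ℝ (fun p => fderiv ℝ G p) (V x, Dv V e0 x)).comp
          ((fderiv ℝ V x).prod (fderiv ℝ (Dv V e0) x))) x :=
      hG'd.hasFDerivAt.comp x hqd
    have hud : HasFDerivAt (fun y => (Dv V vb y, Dv (Dv V e0) vb y))
        ((fderiv ℝ (Dv V vb) x).prod (fderiv ℝ (Dv (Dv V e0) vb) x)) x :=
      HasFDerivAt.prodMk ((diffAt_of_smoothOn hU hVb hx).hasFDerivAt)
        ((diffAt_of_smoothOn hU hAb hx).hasFDerivAt)
    have hBu := hB.clm_apply hud
    have hK : HasFDerivAt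
        (fun y => Dv (Dv (Dv V e0) e0) vb y
          + (2 : ℝ) • (fderiv ℝ G (V y, Dv V e0 y)) (Dv V vb y, Dv (Dv V e0) vb y))
        ((fderiv ℝ (Dv (Dv (Dv V e0) e0) vb) x)
          + (2 : ℝ) • ((fderiv ℝ G (V x, Dv V e0 x)).comp
              ((fderiv ℝ (Dv V vb) x).prod (fderiv ℝ (Dv (Dv V e0) vb) x))
            + ((fderiv ℝ (fun p => fderiv ℝ G p) (V x, Dv V e0 x)).comp
                ((fderiv ℝ V x).prod (fderiv ℝ (Dv V e0) x))).flip
              (Dv V vb x, Dv (Dv V e0) vb x))) x :=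
      ((diffAt_of_smoothOn hU hAeb hx).hasFDerivAt).add (hBu.const_smul (2 : ℝ))
    have hK0 : HasFDerivAt
        (fun y => Dv (Dv (Dv V e0) e0) vb y
          + (2 : ℝ) • (fderiv ℝ G (V y, Dv V e0 y)) (Dv V vb y, Dv (Dv V e0) vb y))
        (0 : (ℝ × (Fin k → ℝ)) →L[ℝ] En n) x := by
      have hee : (fun y => Dv (Dv (Dv V e0) e0) vb y
          + (2 : ℝ) • (fderiv ℝ G (V y, Dv V e0 y)) (Dv V vb y, Dv (Dv V e0) vb y))
          =ᶠ[nhds x] fun _ => (0 : En n) := by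
        filter_upwards [hU.mem_nhds hx] with y hy using hstep1 y hy
      exact (hasFDerivAt_const (0 : En n) x).congr_of_eventuallyEq hee
    have heq0 := hK.unique hK0
    have happ := congrArg (fun L : (ℝ × (Fin k → ℝ)) →L[ℝ] En n => L va) heq0
    simp only [ContinuousLinearMap.add_apply, ContinuousLinearMap.coe_smul',
      Pi.smul_apply, ContinuousLinearMap.comp_apply, ContinuousLinearMap.prod_apply,
      ContinuousLinearMap.flip_apply, ContinuousLinearMap.zero_apply] at happ
    exact happ
  -- now fix t ∈ I and assemble
  intro t ht
  have hx : ((t : ℝ), (0 : Fin k → ℝ)) ∈ U := Set.mem_prod.2 ⟨ht, h0c⟩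
  set x : ℝ × (Fin k → ℝ) := (t, 0) with hxdef
  -- identification of c and its derivative
  have hct : V x = c t := hV0 t ht
  have hc' : deriv c t = Dv V e0 x := by
    have hee : c =ᶠ[nhds t] fun t' => V (t', 0) := by
      filter_upwards [hIopen.mem_nhds ht] with t' ht' using (hV0 t' ht').symm
    rw [hee.deriv_eq]
    exact (slice_hasDerivAt hU hVsm hx).deriv
  -- identification of dS and its derivative
  have hdS : ∀ (i : Fin k), ∀ t' ∈ I, dS n k V i t' = Dv V (0, Pi.single i 1) (t', 0) := by
    intro i t' ht'
    exact slice_fderiv_apply hU hVsm (Set.mem_prod.2 ⟨ht', h0c⟩) (Pi.single i 1)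
  have hdS' : ∀ (i : Fin k),
      deriv (dS n k V i) t = Dv (Dv V (0, Pi.single i 1)) e0 x := by
    intro i
    have hee : dS n k V i =ᶠ[nhds t] fun t' => Dv V (0, Pi.single i 1) (t', 0) := by
      filter_upwards [hIopen.mem_nhds ht] with t' ht' using hdS i t' ht'
    rw [hee.deriv_eq]
    exact (slice_hasDerivAt hU (Dv_smoothOn hU hVsm _) hx).deriv
  -- identification of dS2 and its derivatives
  have hdS2 : ∀ t' ∈ I, dS2 n k V a b t' = Dv (Dv V vb) va (t', 0) := by
    intro t' ht'
    have hxt' : ((t' : ℝ), (0 : Fin k → ℝ)) ∈ U := Set.mem_prod.2 ⟨ht', h0c⟩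
    have hinner : (fun s => fderiv ℝ (fun s' => V (t', s')) s (Pi.single b 1))
        =ᶠ[nhds (0 : Fin k → ℝ)] fun s => Dv V vb (t', s) := by
      filter_upwards [hcube.mem_nhds h0c] with s hs using
        slice_fderiv_apply hU hVsm (Set.mem_prod.2 ⟨ht', hs⟩) (Pi.single b 1)
    show fderiv ℝ (fun s => fderiv ℝ (fun s' => V (t', s')) s (Pi.single b 1)) 0
        (Pi.single a 1) = _
    rw [hinner.fderiv_eq]
    exact slice_fderiv_apply hU hVb hxt' (Pi.single a 1)
  have hw' : ∀ t' ∈ I, deriv (dS2 n k V a b) t' = Dv (Dv (Dv V vb) va) e0 (t', 0) := by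
    intro t' ht'
    have hee : dS2 n k V a b =ᶠ[nhds t'] fun u => Dv (Dv V vb) va (u, 0) := by
      filter_upwards [hIopen.mem_nhds ht'] with u hu using hdS2 u hu
    rw [hee.deriv_eq]
    exact (slice_hasDerivAt hU hVba (Set.mem_prod.2 ⟨ht', h0c⟩)).deriv
  have hw'' : deriv (deriv (dS2 n k V a b)) t = Dv (Dv (Dv (Dv V vb) va) e0) e0 x := by
    have hee : deriv (dS2 n k V a b) =ᶠ[nhds t]
        fun u => Dv (Dv (Dv V vb) va) e0 (u, 0) := by
      filter_upwards [hIopen.mem_nhds ht] with u hu using hw' u hu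
    rw [hee.deriv_eq]
    exact (slice_hasDerivAt hU hVbae hx).deriv
  -- Schwarz swaps
  have hs1a : Dv (Dv V e0) va x = Dv (Dv V va) e0 x := Dv_schwarz hU hVsm hx e0 va
  have hs1b : Dv (Dv V e0) vb x = Dv (Dv V vb) e0 x := Dv_schwarz hU hVsm hx e0 vb
  have hs1bU : ∀ y ∈ U, Dv (Dv V e0) vb y = Dv (Dv V vb) e0 y := fun y hy =>
    Dv_schwarz hU hVsm hy e0 vb
  have hs2 : Dv (Dv (Dv V e0) vb) va x = Dv (Dv (Dv V vb) va) e0 x := by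
    rw [Dv_congr hU hs1bU hx va]
    exact Dv_schwarz hU hVb hx e0 va
  have hs3 : Dv (Dv (Dv (Dv V e0) e0) vb) va x
      = Dv (Dv (Dv (Dv V vb) va) e0) e0 x := by
    -- innermost: Dv (Dv V e0) e0 then vb then va
    have hPQ : ∀ y ∈ U, Dv (Dv (Dv V e0) e0) vb y = Dv (Dv (Dv V vb) e0) e0 y := by
      intro y hy
      rw [Dv_schwarz hU hA hy e0 vb]
      exact Dv_congr hU hs1bU hy e0
    rw [Dv_congr hU hPQ hx va, Dv_schwarz hU hVbe hx e0 va]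
    have hRS : ∀ y ∈ U, Dv (Dv (Dv V vb) e0) va y = Dv (Dv (Dv V vb) va) e0 y :=
      fun y hy => Dv_schwarz hU hVb hy e0 va
    exact Dv_congr hU hRS hx e0
  -- final assembly
  have key := hstep2 x hx
  rw [hs3, hs2, hs1a, hs1b,
    fderivG_split n G hG (hregU x hx) (Dv (Dv V vb) va x) (Dv (Dv (Dv V vb) va) e0 x)]
    at key
  -- rewrite the goal into Dv language
  have hdSa : dS n k V a t = Dv V va x := hdS a t ht
  have hdSb : dS n k V b t = Dv V vb x := hdS b t ht
  have hdSa' : deriv (dS n k V a) t = Dv (Dv V va) e0 x := hdS' a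
  have hdSb' : deriv (dS n k V b) t = Dv (Dv V vb) e0 x := hdS' b
  rw [← hct, hc', hw'', hdS2 t ht, hw' t ht, hdSa, hdSb, hdSa', hdSb']
  rw [smul_add, smul_add] at key
  rw [← key]
  abel
end
end

section
/- Let n ≥ 2, let G be a spray on ℝⁿ, let c : I → ℝⁿ be a geodesic of G with 0 ∈ I, and let e₁,…,e_{n−1} be parallel vector fields along c such that {c'(t), e₁(t),…,e_{n−1}(t)} is a basis of ℝⁿ for every t ∈ I; set W_t = span{e₁(t),…,e_{n−1}(t)}. Let J be a Jacobi tensor along c and assume: (1) Φ is transversal with respect to (W_t), i.e. Φ(t)·c'(t) = 0 and range Φ(t) ⊆ W_t for all t ∈ I; and (2) J(0)·c'(0) = 0, (∇J)(0)·c'(0) = 0, range J(0) ⊆ W₀ and range (∇J)(0) ⊆ W₀. Then J is transversal with respect to (W_t): J(t)·c'(t) = 0 and range J(t) ⊆ W_t for all t ∈ I. -/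
noncomputable section

/-- The span `W_t` of a transversal frame `e₁(t), …, e_m(t)` along `c`. -/
def Wspan (n m : ℕ) (e : Fin m → ℝ → En n) (t : ℝ) : Submodule ℝ (En n) :=
  Submodule.span ℝ (Set.range fun a => e a t)

/-- A family `e₁, …, e_m` of parallel vector fields along `c` on `I` such that
`{c'(t), e₁(t), …, e_m(t)}` is a basis of `ℝⁿ` for every `t ∈ I`. -/
def IsParallelFrame (n m : ℕ) (G : En n × En n → En n) (c : ℝ → En n) (I : Set ℝ)
    (e : Fin m → ℝ → En n) : Prop :=
  (∀ a, IsParallel n G c I (e a)) ∧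
    ∀ t ∈ I,
      LinearIndependent ℝ (fun i : Option (Fin m) => i.elim (deriv c t) fun a => e a t) ∧
      Submodule.span ℝ
        (Set.range fun i : Option (Fin m) => i.elim (deriv c t) fun a => e a t) = ⊤

lemma aux_hasDerivAt_of_contDiffOn {E : Type*} [NormedAddCommGroup E] [NormedSpace ℝ E]
    {f : ℝ → E} {I : Set ℝ} (hIopen : IsOpen I) (hf : ContDiffOn ℝ (⊤:ℕ∞) f I) :
    ∀ t ∈ I, HasDerivAt f (deriv f t) t := fun t ht =>
  ((hf.differentiableOn (by simp)).differentiableAt (hIopen.mem_nhds ht)).hasDerivAt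

open Set ContinuousLinearMap in
lemma aux_DyG_eq {n : ℕ} {G : En n × En n → En n} (hG : IsSemispray n G)
    {x y : En n} (hy : y ≠ 0) :
    DyG n G x y = (fderiv ℝ G (x, y)).comp (inr ℝ (En n) (En n)) := by
  have hopen : IsOpen {p : En n × En n | p.2 ≠ 0} :=
    isOpen_compl_singleton.preimage continuous_snd
  have hGd : HasFDerivAt G (fderiv ℝ G (x, y)) (x, y) :=
    ((hG.contDiffAt (hopen.mem_nhds hy)).differentiableAt (by simp)).hasFDerivAt
  exact (hGd.comp y (hasFDerivAt_prodMk_right x y)).fderiv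

open Set ContinuousLinearMap in
lemma aux_DxG_eq {n : ℕ} {G : En n × En n → En n} (hG : IsSemispray n G)
    {x y : En n} (hy : y ≠ 0) :
    DxG n G x y = (fderiv ℝ G (x, y)).comp (inl ℝ (En n) (En n)) := by
  have hopen : IsOpen {p : En n × En n | p.2 ≠ 0} :=
    isOpen_compl_singleton.preimage continuous_snd
  have hGd : HasFDerivAt G (fderiv ℝ G (x, y)) (x, y) :=
    ((hG.contDiffAt (hopen.mem_nhds hy)).differentiableAt (by simp)).hasFDerivAt
  exact (hGd.comp x (hasFDerivAt_prodMk_left x y)).fderiv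

open Set ContinuousLinearMap in
lemma aux_euler {n : ℕ} {G : En n × En n → En n} (hG : IsSpray n G)
    {x y : En n} (hy : y ≠ 0) : DyG n G x y y = (2 : ℝ) • G (x, y) := by
  have hopen : IsOpen {p : En n × En n | p.2 ≠ 0} :=
    isOpen_compl_singleton.preimage continuous_snd
  have hGd : HasFDerivAt G (fderiv ℝ G (x, y)) (x, y) :=
    ((hG.1.contDiffAt (hopen.mem_nhds hy)).differentiableAt (by simp)).hasFDerivAt
  have hpart : HasFDerivAt (fun y' => G (x, y')) (DyG n G x y) y := by
    rw [aux_DyG_eq hG.1 hy]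
    exact hGd.comp y (hasFDerivAt_prodMk_right x y)
  have hpart' : HasFDerivAt (fun y' => G (x, y')) (DyG n G x y) ((1:ℝ) • y) := by
    rw [one_smul]; exact hpart
  have hsm : HasDerivAt (fun l : ℝ => l • y) y 1 := by
    simpa using (hasDerivAt_id (1:ℝ)).smul_const y
  have h1 : HasDerivAt (fun l : ℝ => G (x, l • y)) (DyG n G x y y) 1 :=
    HasFDerivAt.comp_hasDerivAt (f := fun l : ℝ => l • y) 1 hpart' hsm
  have h2 : (fun l : ℝ => G (x, l • y)) =ᶠ[nhds 1] (fun l : ℝ => l ^ 2 • G (x, y)) := by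
    filter_upwards [eventually_gt_nhds zero_lt_one] with l hl
    exact hG.2 x y hy l hl
  have h3 : HasDerivAt (fun l : ℝ => l ^ 2 • G (x, y)) ((2:ℝ) • G (x, y)) 1 := by
    have := (hasDerivAt_pow 2 (1:ℝ)).smul_const (G (x, y))
    norm_num at this
    exact this
  have h4 : HasDerivAt (fun l : ℝ => G (x, l • y)) ((2:ℝ) • G (x, y)) 1 :=
    h3.congr_of_eventuallyEq h2
  exact h1.unique h4

open Set ContinuousLinearMap in
lemma aux_N_contDiffOn {n : ℕ} {G : En n × En n → En n} (hG : IsSemispray n G)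
    {c : ℝ → En n} {I : Set ℝ} (hIopen : IsOpen I)
    (hc : ContDiffOn ℝ (⊤:ℕ∞) c I) (hreg : ∀ t ∈ I, deriv c t ≠ 0) :
    ContDiffOn ℝ (⊤:ℕ∞) (fun t => Nc n G c t) I ∧
      ContDiffOn ℝ (⊤:ℕ∞) (fun t => DxG n G (c t) (deriv c t)) I := by
  have hopen : IsOpen {p : En n × En n | p.2 ≠ 0} :=
    isOpen_compl_singleton.preimage continuous_snd
  have hc' : ContDiffOn ℝ (⊤:ℕ∞) (deriv c) I := hc.deriv_of_isOpen hIopen (mod_cast le_top)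
  have hγ : ContDiffOn ℝ (⊤:ℕ∞) (fun t => (c t, deriv c t)) I := hc.prodMk hc'
  have hdG : ContDiffOn ℝ (⊤:ℕ∞) (fderiv ℝ G) {p : En n × En n | p.2 ≠ 0} :=
    hG.fderiv_of_isOpen hopen (mod_cast le_top)
  have hcomp : ContDiffOn ℝ (⊤:ℕ∞) (fun t => fderiv ℝ G (c t, deriv c t)) I :=
    hdG.comp hγ (fun t ht => hreg t ht)
  constructor
  · exact (hcomp.clm_comp contDiffOn_const).congr
      (fun t ht => aux_DyG_eq hG (hreg t ht))
  · exact (hcomp.clm_comp contDiffOn_const).congr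
      (fun t ht => aux_DxG_eq hG (hreg t ht))

lemma aux_const_of_deriv_zero {E : Type*} [NormedAddCommGroup E] [NormedSpace ℝ E]
    {I : Set ℝ} (hIopen : IsOpen I) (hIconv : Convex ℝ I) {f : ℝ → E}
    (hf : ∀ t ∈ I, HasDerivAt f 0 t) {x y : ℝ} (hx : x ∈ I) (hy : y ∈ I) :
    f x = f y := by
  refine hIconv.is_const_of_fderivWithin_eq_zero
    (fun t ht => (hf t ht).differentiableAt.differentiableWithinAt) (fun t ht => ?_) hx hy
  rw [fderivWithin_of_isOpen hIopen ht, (hf t ht).hasFDerivAt.fderiv]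
  ext z
  simp

open Set in
lemma aux_linear_ODE_zero {E : Type*} [NormedAddCommGroup E] [NormedSpace ℝ E]
    {A : ℝ → E →L[ℝ] E} {I : Set ℝ} (hIconn : I.OrdConnected)
    (hA : ContinuousOn A I) {f : ℝ → E}
    (hf : ∀ t ∈ I, HasDerivAt f (A t (f t)) t) (h0 : (0:ℝ) ∈ I) (hf0 : f 0 = 0) :
    ∀ t ∈ I, f t = 0 := by
  intro t₁ ht₁
  have hS : uIcc (0:ℝ) t₁ ⊆ I := hIconn.uIcc_subset h0 ht₁
  obtain ⟨C, hC⟩ := (isCompact_uIcc (a := (0:ℝ)) (b := t₁)).exists_bound_of_continuousOn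
    (hA.mono hS)
  set τ : ℝ → ℝ := fun t => max (min 0 t₁) (min t (max 0 t₁)) with hτdef
  have hτmem : ∀ t, τ t ∈ uIcc (0:ℝ) t₁ := by
    intro t
    have h1 : min 0 t₁ ≤ τ t := le_max_left _ _
    have h2 : τ t ≤ max 0 t₁ :=
      max_le ((min_le_left 0 t₁).trans (le_max_left 0 t₁)) (min_le_right _ _)
    simpa [Set.uIcc, Set.mem_Icc] using And.intro h1 h2
  have hτeq : ∀ t ∈ uIcc (0:ℝ) t₁, τ t = t := by
    intro t ht
    have ht' : min 0 t₁ ≤ t ∧ t ≤ max 0 t₁ := by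
      simpa [Set.uIcc, Set.mem_Icc] using ht
    simp only [hτdef]
    rw [min_eq_left ht'.2, max_eq_right ht'.1]
  set v : ℝ → E → E := fun t x => A (τ t) x with hvdef
  have hv : ∀ t, LipschitzOnWith C.toNNReal (v t) Set.univ := by
    intro t
    refine ((A (τ t)).lipschitz.weaken ?_).lipschitzOnWith
    rw [← norm_toNNReal]
    exact Real.toNNReal_mono (hC _ (hτmem t))
  have hg' : ∀ (t : ℝ) (s : Set ℝ), HasDerivWithinAt (fun _ : ℝ => (0:E)) (v t 0) s t := by
    intro t s
    have : v t 0 = 0 := map_zero _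
    rw [this]
    exact hasDerivWithinAt_const t s (0:E)
  rcases le_total 0 t₁ with h | h
  · have huIcc : uIcc (0:ℝ) t₁ = Icc 0 t₁ := uIcc_of_le h
    have key := ODE_solution_unique_of_mem_Icc_right (v := v) (s := fun _ => Set.univ) (fun t _ => hv t)
      (f := f) (g := fun _ => (0:E)) (a := 0) (b := t₁)
      (fun t ht => (hf t (hS (huIcc ▸ ht))).continuousAt.continuousWithinAt)
      (fun t ht => by
        have htm : t ∈ uIcc (0:ℝ) t₁ := huIcc ▸ Ico_subset_Icc_self ht
        have : v t (f t) = A t (f t) := by show A (τ t) (f t) = A t (f t); rw [hτeq t htm]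
        rw [this]
        exact (hf t (hS htm)).hasDerivWithinAt)
      (fun _ _ => Set.mem_univ _)
      continuousOn_const
      (fun t _ => hg' t _)
      (fun _ _ => Set.mem_univ _)
      (by simpa using hf0)
    exact key ⟨h, le_rfl⟩
  · have huIcc : uIcc (0:ℝ) t₁ = Icc t₁ 0 := uIcc_of_ge h
    have key := ODE_solution_unique_of_mem_Icc_left (v := v) (s := fun _ => Set.univ) (fun t _ => hv t)
      (f := f) (g := fun _ => (0:E)) (a := t₁) (b := 0)
      (fun t ht => (hf t (hS (huIcc ▸ ht))).continuousAt.continuousWithinAt)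
      (fun t ht => by
        have htm : t ∈ uIcc (0:ℝ) t₁ := huIcc ▸ Ioc_subset_Icc_self ht
        have : v t (f t) = A t (f t) := by show A (τ t) (f t) = A t (f t); rw [hτeq t htm]
        rw [this]
        exact (hf t (hS htm)).hasDerivWithinAt)
      (fun _ _ => Set.mem_univ _)
      continuousOn_const
      (fun t _ => hg' t _)
      (fun _ _ => Set.mem_univ _)
      (by simpa using hf0)
    exact key ⟨le_rfl, h⟩

set_option maxHeartbeats 1000000 in
open Set ContinuousLinearMap in
/-- If the Jacobi endomorphism is transversal with respect to the parallel distribution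
`W_t` and a Jacobi tensor `J` has transversal initial data at `t = 0`, then `J` is
transversal with respect to `W_t` on all of `I`. -/
theorem jacobi_tensor_transversal (n : ℕ) (hn : 2 ≤ n)
    (G : En n × En n → En n) (hG : IsSpray n G)
    (I : Set ℝ) (hIopen : IsOpen I) (hIconn : I.OrdConnected) (h0 : (0 : ℝ) ∈ I)
    (c : ℝ → En n) (hc : IsGeodesicOn n G c I)
    (e : Fin (n - 1) → ℝ → En n) (he : IsParallelFrame n (n - 1) G c I e)
    (J : ℝ → En n →L[ℝ] En n) (hJ : IsJacobiTensor n G c I J)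
    (hPhi : ∀ t ∈ I, Phi n G c t (deriv c t) = 0 ∧
      ∀ x, Phi n G c t x ∈ Wspan n (n - 1) e t)
    (hJ0 : J 0 (deriv c 0) = 0)
    (hdJ0 : covE n G c J 0 (deriv c 0) = 0)
    (hJr : ∀ x, J 0 x ∈ Wspan n (n - 1) e 0)
    (hdJr : ∀ x, covE n G c J 0 x ∈ Wspan n (n - 1) e 0) :
    ∀ t ∈ I, J t (deriv c t) = 0 ∧ ∀ x, J t x ∈ Wspan n (n - 1) e t := by
  have hIconv : Convex ℝ I := convex_iff_ordConnected.mpr hIconn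
  obtain ⟨hcsm, hreg, hgeo⟩ := hc
  set N : ℝ → En n →L[ℝ] En n := fun t => Nc n G c t with hNdef
  have hN_eq : ∀ t, Nc n G c t = N t := fun _ => rfl
  obtain ⟨hNsm, hDxsm⟩ := aux_N_contDiffOn hG.1 hIopen hcsm hreg
  have hNd : ∀ t ∈ I, HasDerivAt N (deriv N t) t :=
    aux_hasDerivAt_of_contDiffOn hIopen hNsm
  have hNderiv_sm : ContDiffOn ℝ (⊤:ℕ∞) (deriv N) I :=
    hNsm.deriv_of_isOpen hIopen (mod_cast le_top)
  have hNderiv_cont : ContinuousOn (deriv N) I := hNderiv_sm.continuousOn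
  have hPhicont : ContinuousOn (fun t => Phi n G c t) I := by
    have h1 : ContinuousOn (fun t => (2:ℝ) • DxG n G (c t) (deriv c t)) I :=
      hDxsm.continuousOn.const_smul (2:ℝ)
    have h2 : ContinuousOn (fun t => (N t).comp (N t)) I :=
      hNsm.continuousOn.clm_comp hNsm.continuousOn
    exact (h1.sub hNderiv_cont).sub h2
  have hc'sm : ContDiffOn ℝ (⊤:ℕ∞) (deriv c) I :=
    hcsm.deriv_of_isOpen hIopen (mod_cast le_top)
  have hc'd : ∀ t ∈ I, HasDerivAt (deriv c) (deriv (deriv c) t) t :=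
    aux_hasDerivAt_of_contDiffOn hIopen hc'sm
  have hc'' : ∀ t ∈ I, deriv (deriv c) t = -(N t (deriv c t)) := by
    intro t ht
    have h2 : N t (deriv c t) = (2 : ℝ) • G (c t, deriv c t) := aux_euler hG (hreg t ht)
    rw [h2]
    exact eq_neg_of_add_eq_zero_left (hgeo t ht)
  -- the frame
  have hm : n - 1 + 1 = n := by omega
  set ι : Option (Fin (n-1)) ≃ Fin n := (finSuccEquiv (n-1)).symm.trans (finCongr hm) with hιdef
  set j0 : Fin n := ι none with hj0def
  have hιne : ∀ a : Fin (n-1), ι (some a) ≠ j0 := fun a h => by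
    simpa using ι.injective h
  set b : Option (Fin (n-1)) → ℝ → En n := fun i t => i.elim (deriv c t) (fun a => e a t)
    with hbdef
  have hbd : ∀ i, ∀ t ∈ I, HasDerivAt (b i) (-(N t (b i t))) t := by
    rintro (_ | a) t ht
    · have := hc'd t ht
      rwa [hc'' t ht] at this
    · have h1 := aux_hasDerivAt_of_contDiffOn hIopen (he.1 a).1 t ht
      have h2 : deriv (e a) t = -(N t (e a t)) :=
        eq_neg_of_add_eq_zero_left ((he.1 a).2 t ht)
      rwa [h2] at h1
  set B : ℝ → En n →L[ℝ] En n :=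
    fun t => ∑ j : Fin n, (ContinuousLinearMap.proj j).smulRight (b (ι.symm j) t) with hBdef
  have hBapply : ∀ t x, B t x = ∑ j : Fin n, x j • b (ι.symm j) t := by
    intro t x
    simp [hBdef, ContinuousLinearMap.sum_apply]
  have hBsingle : ∀ t (i : Option (Fin (n-1))), B t (Pi.single (ι i) 1) = b i t := by
    intro t i
    rw [hBapply, Finset.sum_eq_single (ι i)]
    · simp
    · intro j _ hj
      rw [Pi.single_eq_of_ne hj]
      simp
    · simp
  have hsrl : ∀ (cl : En n →L[ℝ] ℝ) (v : En n),
      ContinuousLinearMap.smulRightL ℝ (En n) (En n) cl v = cl.smulRight v := fun _ _ => rfl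
  have hBd : ∀ t ∈ I, HasDerivAt B (-((N t).comp (B t))) t := by
    intro t ht
    have hsum : HasDerivAt B
        (∑ j : Fin n, (ContinuousLinearMap.proj (R := ℝ) (φ := fun _ : Fin n => ℝ) j).smulRight
          (-(N t (b (ι.symm j) t)))) t := by
      have h := HasDerivAt.fun_sum (u := (Finset.univ : Finset (Fin n)))
        (A := fun j s => (ContinuousLinearMap.proj (R := ℝ) (φ := fun _ : Fin n => ℝ) j).smulRight (b (ι.symm j) s))
        (A' := fun j => (ContinuousLinearMap.proj (R := ℝ) (φ := fun _ : Fin n => ℝ) j).smulRight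
          (-(N t (b (ι.symm j) t))))
        (x := t) ?_
      · exact h
      · intro j _
        have hcomp := (ContinuousLinearMap.smulRightL ℝ (En n) (En n)
          (ContinuousLinearMap.proj (R := ℝ) (φ := fun _ : Fin n => ℝ) j)).hasFDerivAt.comp_hasDerivAt t
          (hbd (ι.symm j) t ht)
        simpa only [Function.comp_def, hsrl] using hcomp
    convert hsum using 1
    ext x
    simp only [ContinuousLinearMap.neg_apply, ContinuousLinearMap.comp_apply,
      ContinuousLinearMap.sum_apply, hBapply, map_sum, ContinuousLinearMap.smulRight_apply,
      ContinuousLinearMap.proj_apply, map_smul, smul_neg, Finset.sum_neg_distrib]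
  -- invertibility of the frame map
  have hBunit : ∀ t ∈ I, ∃ u : (En n →L[ℝ] En n)ˣ, (u : En n →L[ℝ] En n) = B t := by
    intro t ht
    have hspan := (he.2 t ht).2
    have hsurj : Function.Surjective (B t) := by
      have hle : Submodule.span ℝ
          (Set.range fun i : Option (Fin (n-1)) => i.elim (deriv c t) fun a => e a t) ≤
          LinearMap.range (B t : En n →ₗ[ℝ] En n) := by
        rw [Submodule.span_le]
        rintro _ ⟨i, rfl⟩
        exact ⟨Pi.single (ι i) 1, hBsingle t i⟩
      have htop : LinearMap.range (B t : En n →ₗ[ℝ] En n) = ⊤ :=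
        top_unique (hspan ▸ hle)
      exact LinearMap.range_eq_top.mp htop
    have hinj : Function.Injective (B t) :=
      (LinearMap.injective_iff_surjective (f := (B t : En n →ₗ[ℝ] En n))).mpr hsurj
    set lequiv := LinearEquiv.ofBijective (B t : En n →ₗ[ℝ] En n) ⟨hinj, hsurj⟩ with hleq
    refine ⟨⟨B t, LinearMap.toContinuousLinearMap (lequiv.symm : En n →ₗ[ℝ] En n), ?_, ?_⟩, rfl⟩
    · refine ContinuousLinearMap.ext fun x => ?_
      show B t (lequiv.symm x) = x
      exact lequiv.apply_symm_apply x
    · refine ContinuousLinearMap.ext fun x => ?_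
      show lequiv.symm (B t x) = x
      exact lequiv.symm_apply_apply x
  choose uB huB using hBunit
  set Binv : ℝ → En n →L[ℝ] En n := fun t => Ring.inverse (B t) with hBinvdef
  have hBinv_eq : ∀ t (ht : t ∈ I), Binv t = ((uB t ht)⁻¹ : (En n →L[ℝ] En n)ˣ) := by
    intro t ht
    rw [hBinvdef]
    simp only
    rw [← huB t ht, Ring.inverse_unit]
  have hBinvB : ∀ t (ht : t ∈ I) (x : En n), Binv t (B t x) = x := by
    intro t ht x
    have h : (((uB t ht)⁻¹ : (En n →L[ℝ] En n)ˣ) : En n →L[ℝ] En n) *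
        ((uB t ht : (En n →L[ℝ] En n)ˣ) : En n →L[ℝ] En n) = 1 := Units.inv_mul _
    calc Binv t (B t x)
        = ((((uB t ht)⁻¹ : (En n →L[ℝ] En n)ˣ) : En n →L[ℝ] En n) *
            ((uB t ht : (En n →L[ℝ] En n)ˣ) : En n →L[ℝ] En n)) x := by
          rw [hBinv_eq t ht, ← huB t ht, ContinuousLinearMap.mul_apply]
      _ = x := by rw [h, ContinuousLinearMap.one_apply]
  have hBBinv : ∀ t (ht : t ∈ I) (x : En n), B t (Binv t x) = x := by
    intro t ht x
    have h : ((uB t ht : (En n →L[ℝ] En n)ˣ) : En n →L[ℝ] En n) *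
        (((uB t ht)⁻¹ : (En n →L[ℝ] En n)ˣ) : En n →L[ℝ] En n) = 1 := Units.mul_inv _
    calc B t (Binv t x)
        = (((uB t ht : (En n →L[ℝ] En n)ˣ) : En n →L[ℝ] En n) *
            (((uB t ht)⁻¹ : (En n →L[ℝ] En n)ˣ) : En n →L[ℝ] En n)) x := by
          rw [hBinv_eq t ht, ← huB t ht, ContinuousLinearMap.mul_apply]
      _ = x := by rw [h, ContinuousLinearMap.one_apply]
  have hBinvd : ∀ t ∈ I, HasDerivAt Binv ((Binv t).comp (N t)) t := by
    intro t ht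
    have h1 : HasFDerivAt (Ring.inverse : (En n →L[ℝ] En n) → (En n →L[ℝ] En n))
        (-(ContinuousLinearMap.mulLeftRight ℝ (En n →L[ℝ] En n)
          ((uB t ht)⁻¹ : (En n →L[ℝ] En n)ˣ) ((uB t ht)⁻¹ : (En n →L[ℝ] En n)ˣ))) (B t) := by
      rw [← huB t ht]
      exact hasFDerivAt_ringInverse (uB t ht)
    have h2 := h1.comp_hasDerivAt t (hBd t ht)
    have h3 : HasDerivAt Binv
        ((-(ContinuousLinearMap.mulLeftRight ℝ (En n →L[ℝ] En n)
          ((uB t ht)⁻¹ : (En n →L[ℝ] En n)ˣ) ((uB t ht)⁻¹ : (En n →L[ℝ] En n)ˣ)))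
          (-((N t).comp (B t)))) t := h2
    convert h3 using 1
    rw [← hBinv_eq t ht]
    refine ContinuousLinearMap.ext fun x => ?_
    simp only [ContinuousLinearMap.comp_apply, ContinuousLinearMap.neg_apply,
      ContinuousLinearMap.mulLeftRight_apply, ContinuousLinearMap.mul_apply,
      map_neg, neg_neg]
    rw [hBBinv t ht]
  -- transversality translations
  have hW0 : ∀ t (ht : t ∈ I), ∀ z ∈ Wspan n (n - 1) e t, (Binv t z) j0 = 0 := by
    intro t ht z hz
    induction hz using Submodule.span_induction with
    | mem z hzmem =>
      obtain ⟨a, rfl⟩ := hzmem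
      show (Binv t (e a t)) j0 = 0
      have hea : e a t = B t (Pi.single (ι (some a)) 1) := (hBsingle t (some a)).symm
      rw [hea, hBinvB t ht]
      exact Pi.single_eq_of_ne (Ne.symm (hιne a)) 1
    | zero => simp
    | add z w _ _ hz hw => rw [map_add]; simp [Pi.add_apply, hz, hw]
    | smul r z _ hz => rw [map_smul]; simp [Pi.smul_apply, hz]
  have hW1 : ∀ (t : ℝ) (z : En n), z j0 = 0 → B t z ∈ Wspan n (n - 1) e t := by
    intro t z hzj
    rw [hBapply]
    refine Submodule.sum_mem _ fun j _ => ?_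
    by_cases hj : j = j0
    · subst hj
      have : ι.symm j0 = none := by rw [hj0def, Equiv.symm_apply_apply]
      rw [hzj, this]
      simp
    · have hne : ι.symm j ≠ none := by
        intro hcon
        apply hj
        rw [hj0def, ← hcon, Equiv.apply_symm_apply]
      obtain ⟨a, ha⟩ := Option.ne_none_iff_exists'.mp hne
      rw [ha]
      exact Submodule.smul_mem _ _ (Submodule.subset_span ⟨a, rfl⟩)
  -- the Jacobi tensor and its covariant derivative
  obtain ⟨hJsm, hJac⟩ := hJ
  have hJd : ∀ t ∈ I, HasDerivAt J (deriv J t) t := aux_hasDerivAt_of_contDiffOn hIopen hJsm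
  set dJ : ℝ → En n →L[ℝ] En n := fun t => covE n G c J t with hdJdef
  have hdJsm : ContDiffOn ℝ (⊤:ℕ∞) dJ I := by
    have h1 : ContDiffOn ℝ (⊤:ℕ∞) (deriv J) I := hJsm.deriv_of_isOpen hIopen (mod_cast le_top)
    have h2 : ContDiffOn ℝ (⊤:ℕ∞) (fun t => (N t).comp (J t)) I := hNsm.clm_comp hJsm
    have h3 : ContDiffOn ℝ (⊤:ℕ∞) (fun t => (J t).comp (N t)) I := hJsm.clm_comp hNsm
    exact ((h1.add h2).sub h3 :
      ContDiffOn ℝ (⊤:ℕ∞) (fun t => deriv J t + (N t).comp (J t) - (J t).comp (N t)) I)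
  have hdJd : ∀ t ∈ I, HasDerivAt dJ (deriv dJ t) t := aux_hasDerivAt_of_contDiffOn hIopen hdJsm
  have hJacobi : ∀ t ∈ I, deriv dJ t =
      (dJ t).comp (N t) - (N t).comp (dJ t) - (Phi n G c t).comp (J t) := by
    intro t ht
    have h : deriv dJ t + (N t).comp (dJ t) - (dJ t).comp (N t) +
        (Phi n G c t).comp (J t) = 0 := hJac t ht
    refine eq_of_sub_eq_zero ?_
    rw [← h]
    abel
  set K : ℝ → En n →L[ℝ] En n := fun t => (Binv t).comp ((J t).comp (B t)) with hKdef
  set L : ℝ → En n →L[ℝ] En n := fun t => (Binv t).comp ((dJ t).comp (B t)) with hLdef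
  have hKd : ∀ t ∈ I, HasDerivAt K (L t) t := by
    intro t ht
    have h := (hBinvd t ht).clm_comp ((hJd t ht).clm_comp (hBd t ht))
    have heq : ((Binv t).comp (N t)).comp ((J t).comp (B t)) +
        (Binv t).comp ((deriv J t).comp (B t) + (J t).comp (-((N t).comp (B t)))) = L t := by
      refine ContinuousLinearMap.ext fun x => ?_
      simp only [hLdef, hdJdef, covE, hN_eq, ContinuousLinearMap.add_apply,
        ContinuousLinearMap.comp_apply, ContinuousLinearMap.sub_apply,
        ContinuousLinearMap.neg_apply, map_add, map_sub, map_neg]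
      abel
    rw [heq] at h
    exact h
  have hLd : ∀ t ∈ I,
      HasDerivAt L (-((Binv t).comp (((Phi n G c t).comp (J t)).comp (B t)))) t := by
    intro t ht
    have h := (hBinvd t ht).clm_comp ((hdJd t ht).clm_comp (hBd t ht))
    have heq : ((Binv t).comp (N t)).comp ((dJ t).comp (B t)) +
        (Binv t).comp ((deriv dJ t).comp (B t) + (dJ t).comp (-((N t).comp (B t)))) =
        -((Binv t).comp (((Phi n G c t).comp (J t)).comp (B t))) := by
      rw [hJacobi t ht]
      refine ContinuousLinearMap.ext fun x => ?_
      simp only [ContinuousLinearMap.add_apply, ContinuousLinearMap.comp_apply,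
        ContinuousLinearMap.sub_apply, ContinuousLinearMap.neg_apply, map_add, map_sub, map_neg]
      abel
    rw [heq] at h
    exact h
  -- the first row of `K` vanishes
  have hKrow : ∀ (x : En n), ∀ t ∈ I, (K t x) j0 = 0 := by
    intro x
    have hLx : ∀ t ∈ I, HasDerivAt (fun s => (L s x) j0) 0 t := by
      intro t ht
      have h1 : HasDerivAt (fun s => L s x)
          (-((Binv t).comp (((Phi n G c t).comp (J t)).comp (B t))) x) t := by
        have := (hLd t ht).clm_apply (hasDerivAt_const t x)
        simpa using this
      have h2 := (ContinuousLinearMap.proj (R := ℝ) (φ := fun _ : Fin n => ℝ)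
        j0).hasFDerivAt.comp_hasDerivAt t h1
      have h3 : ((-((Binv t).comp (((Phi n G c t).comp (J t)).comp (B t)))) x) j0 = 0 := by
        simp only [ContinuousLinearMap.neg_apply, Pi.neg_apply,
          ContinuousLinearMap.comp_apply]
        rw [hW0 t ht _ ((hPhi t ht).2 (J t (B t x)))]
        exact neg_zero
      have h2' : HasDerivAt (fun s => (L s x) j0)
          (((-((Binv t).comp (((Phi n G c t).comp (J t)).comp (B t)))) x) j0) t := by
        exact h2
      rw [h3] at h2'
      exact h2'
    have hLx0 : ∀ t ∈ I, (L t x) j0 = 0 := by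
      intro t ht
      have hconst := aux_const_of_deriv_zero hIopen hIconv hLx ht h0
      rw [hconst]
      simp only [hLdef, ContinuousLinearMap.comp_apply]
      exact hW0 0 h0 _ (hdJr _)
    have hKx : ∀ t ∈ I, HasDerivAt (fun s => (K s x) j0) 0 t := by
      intro t ht
      have h1 : HasDerivAt (fun s => K s x) (L t x) t := by
        have := (hKd t ht).clm_apply (hasDerivAt_const t x)
        simpa using this
      have h2 := (ContinuousLinearMap.proj (R := ℝ) (φ := fun _ : Fin n => ℝ)
        j0).hasFDerivAt.comp_hasDerivAt t h1
      have h2' : HasDerivAt (fun s => (K s x) j0) ((L t x) j0) t := by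
        simpa only [Function.comp_def, ContinuousLinearMap.proj_apply] using h2
      rw [hLx0 t ht] at h2'
      exact h2'
    intro t ht
    have hconst := aux_const_of_deriv_zero hIopen hIconv hKx ht h0
    rw [hconst]
    simp only [hKdef, ContinuousLinearMap.comp_apply]
    exact hW0 0 h0 _ (hJr _)
  -- the ODE for (J c', (∇J) c')
  set uu : ℝ → En n := fun t => J t (deriv c t) with huudef
  set ww : ℝ → En n := fun t => dJ t (deriv c t) with hwwdef
  set A : ℝ → (En n × En n) →L[ℝ] En n × En n := fun t =>
    ((ContinuousLinearMap.snd ℝ (En n) (En n)) -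
      (N t).comp (ContinuousLinearMap.fst ℝ (En n) (En n))).prod
      (-((Phi n G c t).comp (ContinuousLinearMap.fst ℝ (En n) (En n))) -
        (N t).comp (ContinuousLinearMap.snd ℝ (En n) (En n))) with hAdef
  have hAcont : ContinuousOn A I := by
    have h1 : ContinuousOn (fun t => (ContinuousLinearMap.snd ℝ (En n) (En n)) -
        (N t).comp (ContinuousLinearMap.fst ℝ (En n) (En n))) I :=
      continuousOn_const.sub (hNsm.continuousOn.clm_comp continuousOn_const)
    have h2 : ContinuousOn (fun t =>
        -((Phi n G c t).comp (ContinuousLinearMap.fst ℝ (En n) (En n))) -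
        (N t).comp (ContinuousLinearMap.snd ℝ (En n) (En n))) I :=
      ((hPhicont.clm_comp continuousOn_const).neg).sub
        (hNsm.continuousOn.clm_comp continuousOn_const)
    have h3 := (ContinuousLinearMap.prodₗᵢ (𝕜 := ℝ) (E := En n × En n) (F := En n)
      (G := En n) ℝ).continuous.comp_continuousOn (h1.prodMk h2)
    exact h3
  have hff : ∀ t ∈ I, HasDerivAt (fun s => (uu s, ww s)) (A t (uu t, ww t)) t := by
    intro t ht
    have hu1 : HasDerivAt uu (deriv J t (deriv c t) + J t (deriv (deriv c) t)) t :=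
      (hJd t ht).clm_apply (hc'd t ht)
    have hu2 : deriv J t (deriv c t) + J t (deriv (deriv c) t) = ww t - N t (uu t) := by
      rw [hc'' t ht]
      simp only [hwwdef, huudef, hdJdef, covE, hN_eq, map_neg,
        ContinuousLinearMap.sub_apply, ContinuousLinearMap.add_apply,
        ContinuousLinearMap.comp_apply]
      abel
    have hw1 : HasDerivAt ww (deriv dJ t (deriv c t) + dJ t (deriv (deriv c) t)) t :=
      (hdJd t ht).clm_apply (hc'd t ht)
    have hw2 : deriv dJ t (deriv c t) + dJ t (deriv (deriv c) t) =
        -(Phi n G c t (uu t)) - N t (ww t) := by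
      rw [hc'' t ht, hJacobi t ht]
      simp only [huudef, hwwdef, map_neg, ContinuousLinearMap.sub_apply,
        ContinuousLinearMap.comp_apply]
      abel
    rw [hu2] at hu1
    rw [hw2] at hw1
    have hp := hu1.prodMk hw1
    convert hp using 1
    rfl
  have hval := aux_linear_ODE_zero hIconn hAcont hff h0 (by
    show (uu 0, ww 0) = 0
    have h1 : uu 0 = 0 := hJ0
    have h2 : ww 0 = 0 := hdJ0
    rw [h1, h2]
    rfl)
  -- conclusion
  intro t ht
  constructor
  · exact congrArg Prod.fst (hval t ht)
  · intro x0
    have hcoord : (Binv t (J t x0)) j0 = 0 := by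
      have hk := hKrow (Binv t x0) t ht
      simp only [hKdef, ContinuousLinearMap.comp_apply] at hk
      rwa [hBBinv t ht] at hk
    have hrw : J t x0 = B t (Binv t (J t x0)) := (hBBinv t ht _).symm
    rw [hrw]
    exact hW1 t _ hcoord
end
end

section
/- Let G be a semispray on ℝⁿ, let c : I → ℝⁿ be a geodesic of G, and let J : I → End(ℝⁿ) be a Jacobi tensor along c such that J(t) is an invertible linear map for every t ∈ I. Then the endomorphism field L(t) = (∇J)(t) ∘ J(t)⁻¹ satisfies the tensor Riccati equation along c: ∇L + L∘L + Φ = 0 on I. -/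
noncomputable section

private lemma riccati_algebra {A : Type*} [Ring A] (a b N Φ K K' a' b' L' : A)
    (hab : a * b = 1) (hba : b * a = 1)
    (hK' : K' + N * K - K * N + Φ * a = 0)
    (hKdef : K = a' + N * a - a * N)
    (hprod : a' * b + a * b' = 0)
    (hL' : L' = K' * b + K * b') :
    L' + N * (K * b) - (K * b) * N + (K * b) * (K * b) + Φ = 0 := by
  have hb' : b' = -(b * a' * b) := by
    have h2 : b * a' * b + b' = 0 := by
      calc b * a' * b + b' = b * a' * b + (b * a) * b' := by rw [hba, one_mul]
        _ = b * (a' * b + a * b') := by noncomm_ring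
        _ = 0 := by rw [hprod, mul_zero]
    exact eq_neg_of_add_eq_zero_right h2
  have hK'eq : K' = K * N - N * K - Φ * a := by
    have h0 : K' - (K * N - N * K - Φ * a) = 0 := by
      calc K' - (K * N - N * K - Φ * a) = K' + N * K - K * N + Φ * a := by noncomm_ring
        _ = 0 := hK'
    exact sub_eq_zero.mp h0
  have ha' : a' = K - N * a + a * N := by rw [hKdef]; noncomm_ring
  calc L' + N * (K * b) - (K * b) * N + (K * b) * (K * b) + Φ
      = (K * N * b - K * b * N + Φ)
          + ((K * b * N) * (a * b) - (K * (b * a)) * (N * b) - Φ * (a * b)) := by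
        rw [hL', hK'eq, hb', ha']; noncomm_ring
    _ = 0 := by rw [hab, hba]; noncomm_ring

private lemma Nc_differentiableAt (n : ℕ) (G : En n × En n → En n) (hG : IsSemispray n G)
    (I : Set ℝ) (hIopen : IsOpen I) (c : ℝ → En n)
    (hc1 : ContDiffOn ℝ (⊤ : ℕ∞) c I) (hc2 : ∀ t ∈ I, deriv c t ≠ 0)
    (t₀ : ℝ) (ht : t₀ ∈ I) :
    DifferentiableAt ℝ (fun t => Nc n G c t) t₀ := by
  have hIt : I ∈ nhds t₀ := hIopen.mem_nhds ht
  have hU : IsOpen {p : En n × En n | p.2 ≠ 0} := isOpen_compl_singleton.preimage continuous_snd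
  set i : En n →L[ℝ] En n × En n :=
    (0 : En n →L[ℝ] En n).prod (ContinuousLinearMap.id ℝ (En n)) with hi
  set F : ℝ → (En n × En n) →L[ℝ] En n := fun t => fderiv ℝ G (c t, deriv c t) with hF
  have hderC : ContDiffOn ℝ (⊤ : ℕ∞) (deriv c) I :=
    ((contDiffOn_infty_iff_deriv_of_isOpen hIopen).1 hc1).2
  have hcurve : ContDiffAt ℝ (⊤ : ℕ∞) (fun t => (c t, deriv c t)) t₀ :=
    (hc1.contDiffAt hIt).prodMk (hderC.contDiffAt hIt)
  have hfd : ContDiffOn ℝ (⊤ : ℕ∞) (fderiv ℝ G) {p : En n × En n | p.2 ≠ 0} :=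
    ((contDiffOn_infty_iff_fderiv_of_isOpen hU).1 hG).2
  have hFdiff : DifferentiableAt ℝ F t₀ := by
    have h2 : ContDiffAt ℝ (⊤ : ℕ∞) (fderiv ℝ G) (c t₀, deriv c t₀) :=
      hfd.contDiffAt (hU.mem_nhds (hc2 t₀ ht))
    exact ((h2.comp t₀ hcurve).differentiableAt (by simp))
  have hNeq : ∀ t ∈ I, Nc n G c t = (F t).comp i := by
    intro t htI
    have hGd : DifferentiableAt ℝ G (c t, deriv c t) :=
      (hG.contDiffAt (hU.mem_nhds (hc2 t htI))).differentiableAt (by simp)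
    have hlin : HasFDerivAt (fun y' : En n => (c t, y')) i (deriv c t) :=
      HasFDerivAt.prodMk (hasFDerivAt_const (c t) _) (hasFDerivAt_id _)
    exact (hGd.hasFDerivAt.comp (deriv c t) hlin).fderiv
  have h := hFdiff.clm_comp (differentiableAt_const i)
  apply h.congr_of_eventuallyEq
  filter_upwards [hIt] with t htI using hNeq t htI


/-- If `J` is an invertible Jacobi tensor along a geodesic, then `L = ∇J ∘ J⁻¹` satisfies
the tensor Riccati equation `∇L + L∘L + Φ = 0`. -/
theorem invertible_jacobi_tensor_riccati (n : ℕ) (hn : 1 ≤ n)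
    (G : En n × En n → En n) (hG : IsSemispray n G)
    (I : Set ℝ) (hIopen : IsOpen I) (hIconn : I.OrdConnected)
    (c : ℝ → En n) (hc : IsGeodesicOn n G c I)
    (J : ℝ → En n →L[ℝ] En n) (hJ : IsJacobiTensor n G c I J)
    (Jinv : ℝ → En n →L[ℝ] En n)
    (hinv : ∀ t ∈ I, (J t).comp (Jinv t) = ContinuousLinearMap.id ℝ (En n) ∧
      (Jinv t).comp (J t) = ContinuousLinearMap.id ℝ (En n))
    (L : ℝ → En n →L[ℝ] En n)
    (hL : ∀ t, L t = (covE n G c J t).comp (Jinv t)) :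
    ∀ t ∈ I, covE n G c L t + (L t).comp (L t) + Phi n G c t = 0 := by
  intro t₀ ht
  have hIt : I ∈ nhds t₀ := hIopen.mem_nhds ht
  have hcm : ∀ f g : En n →L[ℝ] En n, f.comp g = f * g := fun f g => rfl
  -- units
  have hab : ∀ t ∈ I, J t * Jinv t = 1 := by
    intro t htI
    rw [ContinuousLinearMap.mul_def, ContinuousLinearMap.one_def]
    exact (hinv t htI).1
  have hba : ∀ t ∈ I, Jinv t * J t = 1 := by
    intro t htI
    rw [ContinuousLinearMap.mul_def, ContinuousLinearMap.one_def]
    exact (hinv t htI).2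
  -- differentiability of J, deriv J, N
  have hJdiff : DifferentiableAt ℝ J t₀ := (hJ.1.contDiffAt hIt).differentiableAt (by simp)
  have hderJdiff : DifferentiableAt ℝ (deriv J) t₀ :=
    ((((contDiffOn_infty_iff_deriv_of_isOpen hIopen).1 hJ.1).2).contDiffAt hIt).differentiableAt
      (by simp)
  have hNdiff : DifferentiableAt ℝ (fun t => Nc n G c t) t₀ :=
    Nc_differentiableAt n G hG I hIopen c hc.1 hc.2.1 t₀ ht
  -- K = covE J
  set K : ℝ → En n →L[ℝ] En n := fun t => covE n G c J t with hKdef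
  have hKdiff : DifferentiableAt ℝ K t₀ := by
    have : K = fun t => deriv J t + (Nc n G c t).comp (J t) - (J t).comp (Nc n G c t) := rfl
    rw [this]
    exact (hderJdiff.add (hNdiff.clm_comp hJdiff)).sub (hJdiff.clm_comp hNdiff)
  -- Jinv is eventually Ring.inverse ∘ J, hence differentiable
  have hRinv : ∀ t ∈ I, Jinv t = Ring.inverse (J t) := by
    intro t htI
    exact (Ring.inverse_unit ⟨J t, Jinv t, hab t htI, hba t htI⟩).symm
  have hu : IsUnit (J t₀) := ⟨⟨J t₀, Jinv t₀, hab t₀ ht, hba t₀ ht⟩, rfl⟩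
  have hJinvdiff : DifferentiableAt ℝ Jinv t₀ := by
    have h1 : DifferentiableAt ℝ (fun t => Ring.inverse (J t)) t₀ :=
      (differentiableAt_inverse hu).comp t₀ hJdiff
    apply h1.congr_of_eventuallyEq
    filter_upwards [hIt] with t htI using hRinv t htI
  -- product rule facts
  have hprod : deriv J t₀ * Jinv t₀ + J t₀ * deriv Jinv t₀ = 0 := by
    have h1 : HasDerivAt (fun t => J t * Jinv t)
        (deriv J t₀ * Jinv t₀ + J t₀ * deriv Jinv t₀) t₀ :=
      hJdiff.hasDerivAt.mul hJinvdiff.hasDerivAt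
    have h3 : HasDerivAt (fun t => J t * Jinv t) 0 t₀ := by
      apply (hasDerivAt_const t₀ (1 : En n →L[ℝ] En n)).congr_of_eventuallyEq
      filter_upwards [hIt] with t htI using hab t htI
    exact h1.unique h3
  have hLfun : L = fun t => K t * Jinv t := funext fun t => by rw [hL t, hcm]
  have hL' : deriv L t₀ = deriv K t₀ * Jinv t₀ + K t₀ * deriv Jinv t₀ := by
    rw [hLfun]
    exact (hKdiff.hasDerivAt.mul hJinvdiff.hasDerivAt).deriv
  -- the Jacobi tensor equation at t₀
  have hJac : deriv K t₀ + Nc n G c t₀ * K t₀ - K t₀ * Nc n G c t₀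
      + Phi n G c t₀ * J t₀ = 0 := hJ.2 t₀ ht
  -- structural identity for K
  have hKstr : K t₀ = deriv J t₀ + Nc n G c t₀ * J t₀ - J t₀ * Nc n G c t₀ := rfl
  -- conclude via the algebraic Riccati identity
  have hmain := riccati_algebra (J t₀) (Jinv t₀) (Nc n G c t₀) (Phi n G c t₀)
    (K t₀) (deriv K t₀) (deriv J t₀) (deriv Jinv t₀) (deriv L t₀)
    (hab t₀ ht) (hba t₀ ht) hJac hKstr hprod hL'
  show deriv L t₀ + (Nc n G c t₀).comp (L t₀) - (L t₀).comp (Nc n G c t₀)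
      + (L t₀).comp (L t₀) + Phi n G c t₀ = 0
  rw [hcm, hcm, hcm, hL t₀, hcm]
  exact hmain
end
end

section
/- Let n ≥ 2, let G be a semispray on ℝⁿ, let c : I → ℝⁿ be a geodesic of G, and let V : I × (−ε,ε)^{n−1} → ℝⁿ be an (n−1)-parameter geodesic variation of c which is a C^∞ diffeomorphism onto its image U (an open subset of ℝⁿ). Let Z : U → ℝⁿ be the vector field induced by ∂/∂t, i.e. Z(V(t,s)) = ∂_tV(t,s), and set A(t) = A_Z(c(t)). Then along c the tensor Riccati equation holds: A'(t) + N(t)∘A(t) − A(t)∘N(t) + A(t)∘A(t) + Φ(t) = 0 for all t ∈ I. -/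
noncomputable section

/-- The shape-operator-type tensor `A_Z(x) = DZ(x) + D_yG(x, Z(x))` associated to a
vector field `Z` (the coordinate form of `K ∘ DZ`). -/
def AZ (n : ℕ) (G : En n × En n → En n) (Z : En n → En n) (x : En n) : En n →L[ℝ] En n :=
  fderiv ℝ Z x + DyG n G x (Z x)


section Aux

open ContinuousLinearMap

lemma DxG_eq (n : ℕ) (G : En n × En n → En n) (x y : En n)
    (hd : DifferentiableAt ℝ G (x, y)) :
    DxG n G x y = (fderiv ℝ G (x, y)).comp (ContinuousLinearMap.inl ℝ (En n) (En n)) := by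
  have h := HasFDerivAt.comp (f := fun e => (e, y)) x hd.hasFDerivAt (hasFDerivAt_prodMk_left x y)
  exact h.fderiv

lemma DyG_eq (n : ℕ) (G : En n × En n → En n) (x y : En n)
    (hd : DifferentiableAt ℝ G (x, y)) :
    DyG n G x y = (fderiv ℝ G (x, y)).comp (ContinuousLinearMap.inr ℝ (En n) (En n)) := by
  have h := hd.hasFDerivAt.comp y (hasFDerivAt_prodMk_right x y)
  exact h.fderiv

end Aux

/-- If an `(n−1)`-parameter geodesic variation of a geodesic `c` of a semispray is a
`C^∞` diffeomorphism onto its (open) image and `Z` is the vector field induced by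
`∂/∂t` on the image, then `A(t) = A_Z(c(t))` satisfies the tensor Riccati equation
`A' + N∘A − A∘N + A∘A + Φ = 0` along `c`. -/
theorem shape_operator_riccati (n : ℕ) (hn : 2 ≤ n)
    (G : En n × En n → En n) (hG : IsSemispray n G)
    (I : Set ℝ) (hIopen : IsOpen I) (hIconn : I.OrdConnected)
    (c : ℝ → En n) (hc : IsGeodesicOn n G c I)
    (ε : ℝ) (hε : 0 < ε) (V : ℝ × (Fin (n - 1) → ℝ) → En n)
    (hV : IsGeodesicVariation n G c I (n - 1) ε V)
    (hVinj : Set.InjOn V (I ×ˢ cube (n - 1) ε))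
    (hVopen : IsOpen (V '' (I ×ˢ cube (n - 1) ε)))
    (g : En n → ℝ × (Fin (n - 1) → ℝ))
    (hg : ContDiffOn ℝ (⊤ : ℕ∞) g (V '' (I ×ˢ cube (n - 1) ε)))
    (hgV : ∀ p ∈ I ×ˢ cube (n - 1) ε, g (V p) = p)
    (Z : En n → En n)
    (hZ : ∀ p ∈ I ×ˢ cube (n - 1) ε, Z (V p) = deriv (fun t' => V (t', p.2)) p.1) :
    ∀ t ∈ I,
      deriv (fun t' => AZ n G Z (c t')) t
        + (Nc n G c t).comp (AZ n G Z (c t)) - (AZ n G Z (c t)).comp (Nc n G c t)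
        + (AZ n G Z (c t)).comp (AZ n G Z (c t)) + Phi n G c t = 0 := by
  have hone : ((⊤:ℕ∞) : WithTop ℕ∞) ≠ 0 := by simp
  have htop1 : ((⊤:ℕ∞) : WithTop ℕ∞) + 1 ≤ ((⊤:ℕ∞) : WithTop ℕ∞) := by simp
  set Ω : Set (ℝ × (Fin (n-1) → ℝ)) := I ×ˢ cube (n - 1) ε with hΩdef
  set U : Set (En n) := V '' Ω with hUdef
  have hU : IsOpen U := hVopen
  have hΩ : IsOpen Ω := by
    refine hIopen.prod ?_
    have : cube (n-1) ε = Set.pi Set.univ (fun _ => Metric.ball (0:ℝ) ε) := by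
      ext s; simp [cube, Real.dist_0_eq_abs]
    rw [this]
    exact isOpen_set_pi Set.finite_univ (fun _ _ => Metric.isOpen_ball)
  have h0cube : (0 : Fin (n-1) → ℝ) ∈ cube (n-1) ε := fun i => by simpa using hε
  -- G smoothness at points with nonzero velocity
  have hGopen : IsOpen {p : En n × En n | p.2 ≠ 0} :=
    isOpen_compl_singleton.preimage continuous_snd
  have hGat : ∀ x y : En n, y ≠ 0 → ContDiffAt ℝ (⊤:ℕ∞) G (x, y) := fun x y hy =>
    hG.contDiffAt (hGopen.mem_nhds hy)
  -- partial t-derivative of V as a smooth function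
  have hVsm := hV.1
  have hVdiff : ∀ p ∈ Ω, HasFDerivAt V (fderiv ℝ V p) p := fun p hp =>
    ((hVsm.contDiffAt (hΩ.mem_nhds hp)).differentiableAt hone).hasFDerivAt
  have hpartial : ∀ p ∈ Ω, HasDerivAt (fun t' => V (t', p.2))
      (fderiv ℝ V p ((1:ℝ), (0 : Fin (n-1) → ℝ))) p.1 := by
    intro p hp
    have h1 : HasDerivAt (fun t' : ℝ => (t', p.2)) ((1:ℝ), (0 : Fin (n-1) → ℝ)) p.1 :=
      (hasDerivAt_id p.1).prodMk (hasDerivAt_const p.1 p.2)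
    have h2 : HasFDerivAt V (fderiv ℝ V p) (p.1, p.2) := by
      simpa using hVdiff p hp
    exact h2.comp_hasDerivAt p.1 h1
  have hZV : ∀ p ∈ Ω, Z (V p) = fderiv ℝ V p ((1:ℝ), (0 : Fin (n-1) → ℝ)) := fun p hp =>
    (hZ p hp).trans (hpartial p hp).deriv
  -- smoothness of Z on U
  have hF : ContDiffOn ℝ (⊤:ℕ∞) (fun p => fderiv ℝ V p ((1:ℝ), (0 : Fin (n-1) → ℝ))) Ω :=
    (hVsm.fderiv_of_isOpen hΩ htop1).clm_apply contDiffOn_const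
  have hgsub : U ⊆ g ⁻¹' Ω := by
    rintro x ⟨p, hp, rfl⟩
    simpa [hgV p hp] using hp
  have hZsm : ContDiffOn ℝ (⊤:ℕ∞) Z U := by
    refine (hF.comp hg hgsub).congr ?_
    rintro x ⟨p, hp, rfl⟩
    simp only [Function.comp, hgV p hp]
    exact hZV p hp
  have hZat : ∀ x ∈ U, ContDiffAt ℝ (⊤:ℕ∞) Z x := fun x hx =>
    hZsm.contDiffAt (hU.mem_nhds hx)
  -- Z equals deriv c along c
  have hZc : ∀ t' ∈ I, Z (c t') = deriv c t' := by
    intro t' ht'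
    have hp : ((t' : ℝ), (0 : Fin (n-1) → ℝ)) ∈ Ω := ⟨ht', h0cube⟩
    have h1 := hZ _ hp
    have h2 : (fun t'' => V (t'', (0 : Fin (n-1) → ℝ))) =ᶠ[nhds t'] c := by
      filter_upwards [hIopen.mem_nhds ht'] with s hs using hV.2.1 s hs
    rw [hV.2.1 t' ht'] at h1
    rw [h1]
    exact h2.deriv_eq
  -- geodesic vector field identity on U
  have hgeoZ : ∀ x ∈ U, (fderiv ℝ Z x) (Z x) = -((2:ℝ) • G (x, Z x)) := by
    rintro x ⟨⟨t₀, s₀⟩, hp, rfl⟩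
    set γ : ℝ → En n := fun t' => V (t', s₀) with hγdef
    have hgeo := hV.2.2 s₀ hp.2
    have hZγ : ∀ t' ∈ I, Z (γ t') = deriv γ t' := fun t' ht' => hZ (t', s₀) ⟨ht', hp.2⟩
    have ht₀ : t₀ ∈ I := hp.1
    have hγ' : HasDerivAt γ (deriv γ t₀) t₀ :=
      ((hgeo.1.contDiffAt (hIopen.mem_nhds ht₀)).differentiableAt hone).hasDerivAt
    have hγU : γ t₀ ∈ U := ⟨(t₀, s₀), hp, rfl⟩
    have hZd : HasFDerivAt Z (fderiv ℝ Z (γ t₀)) (γ t₀) :=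
      ((hZat _ hγU).differentiableAt hone).hasFDerivAt
    have hcomp : HasDerivAt (Z ∘ γ) (fderiv ℝ Z (γ t₀) (deriv γ t₀)) t₀ :=
      hZd.comp_hasDerivAt t₀ hγ'
    have heq : deriv γ =ᶠ[nhds t₀] Z ∘ γ := by
      filter_upwards [hIopen.mem_nhds ht₀] with s hs using (hZγ s hs).symm
    have hder : HasDerivAt (deriv γ) (fderiv ℝ Z (γ t₀) (deriv γ t₀)) t₀ :=
      hcomp.congr_of_eventuallyEq heq
    have hge := hgeo.2.2 t₀ ht₀
    rw [hder.deriv] at hge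
    rw [hZγ t₀ ht₀]
    exact eq_neg_of_add_eq_zero_left hge
  -- now work at the base point c t
  intro t ht
  have hx₀U : c t ∈ U := ⟨(t, 0), ⟨ht, h0cube⟩, hV.2.1 t ht⟩
  have hZx₀ : Z (c t) = deriv c t := hZc t ht
  have hne : deriv c t ≠ 0 := hc.2.1 t ht
  set B : En n →L[ℝ] En n := fderiv ℝ Z (c t) with hBdef
  set f'' : En n →L[ℝ] En n →L[ℝ] En n := fderiv ℝ (fderiv ℝ Z) (c t) with hf''def
  have hZc2 : ContDiffAt ℝ (⊤:ℕ∞) Z (c t) := hZat _ hx₀U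
  have hB' : HasFDerivAt (fderiv ℝ Z) f'' (c t) :=
    ((hZc2.fderiv_right htop1).differentiableAt hone).hasFDerivAt
  have hZdAt : HasFDerivAt Z B (c t) := (hZc2.differentiableAt hone).hasFDerivAt
  have hasF : ∀ᶠ y in nhds (c t), HasFDerivAt Z (fderiv ℝ Z y) y := by
    filter_upwards [hU.mem_nhds hx₀U] with y hy using
      ((hZat y hy).differentiableAt hone).hasFDerivAt
  have hsymm : ∀ v w, f'' v w = f'' w v :=
    second_derivative_symmetric_of_eventually_of_real hasF hB'
  -- differentiate the geodesic field identity
  set G' : En n × En n →L[ℝ] En n := fderiv ℝ G (c t, deriv c t) with hG'def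
  have hGdiff : DifferentiableAt ℝ G (c t, deriv c t) :=
    (hGat _ _ hne).differentiableAt hone
  have hGd : HasFDerivAt G G' (c t, Z (c t)) := by
    rw [hZx₀]; exact hGdiff.hasFDerivAt
  have h1 : HasFDerivAt (fun x => fderiv ℝ Z x (Z x))
      ((fderiv ℝ Z (c t)).comp B + f''.flip (Z (c t))) (c t) := hB'.clm_apply hZdAt
  have hpair : HasFDerivAt (fun x => (x, Z x))
      ((ContinuousLinearMap.id ℝ (En n)).prod B) (c t) := (hasFDerivAt_id _).prodMk hZdAt
  have h2 : HasFDerivAt (fun x => G (x, Z x))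
      (G'.comp ((ContinuousLinearMap.id ℝ (En n)).prod B)) (c t) := hGd.comp (c t) hpair
  have hΨ : HasFDerivAt (fun x => fderiv ℝ Z x (Z x) + (2:ℝ) • G (x, Z x))
      (((fderiv ℝ Z (c t)).comp B + f''.flip (Z (c t)))
        + (2:ℝ) • (G'.comp ((ContinuousLinearMap.id ℝ (En n)).prod B))) (c t) :=
    h1.add (h2.const_smul (2:ℝ))
  have hΨeq : (fun x => fderiv ℝ Z x (Z x) + (2:ℝ) • G (x, Z x))
      =ᶠ[nhds (c t)] (fun _ => (0 : En n)) := by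
    filter_upwards [hU.mem_nhds hx₀U] with y hy
    rw [hgeoZ y hy]; abel
  have hΨ0 : HasFDerivAt (fun x => fderiv ℝ Z x (Z x) + (2:ℝ) • G (x, Z x))
      (0 : En n →L[ℝ] En n) (c t) :=
    (hasFDerivAt_const (0 : En n) (c t)).congr_of_eventuallyEq hΨeq
  have hzero := hΨ.unique hΨ0
  have hsplit : ∀ w, G' ((w, B w) : En n × En n)
      = DxG n G (c t) (deriv c t) w + Nc n G c t (B w) := by
    intro w
    have e1 : ((w, B w) : En n × En n) = ((w, 0) : En n × En n) + ((0, B w) : En n × En n) := by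
      simp
    have hdx : DxG n G (c t) (deriv c t)
        = G'.comp (ContinuousLinearMap.inl ℝ (En n) (En n)) := DxG_eq n G _ _ hGdiff
    have hdy : Nc n G c t = G'.comp (ContinuousLinearMap.inr ℝ (En n) (En n)) :=
      DyG_eq n G _ _ hGdiff
    rw [e1, map_add, hdx, hdy]
    simp
  have hkey : ∀ w, f'' w (deriv c t)
      = -(B (B w) + (2:ℝ) • (DxG n G (c t) (deriv c t) w) + (2:ℝ) • (Nc n G c t (B w))) := by
    intro w
    have := congrArg (fun (L : En n →L[ℝ] En n) => L w) hzero
    simp only [ContinuousLinearMap.add_apply, ContinuousLinearMap.coe_comp',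
      Function.comp_apply, ContinuousLinearMap.flip_apply,
      ContinuousLinearMap.smul_apply, ContinuousLinearMap.zero_apply,
      ContinuousLinearMap.prod_apply, ContinuousLinearMap.coe_id', id_eq] at this
    rw [hZx₀] at this
    rw [hsplit w] at this
    have hBB : fderiv ℝ Z (c t) = B := rfl
    rw [hBB] at this
    have := this
    -- this : B (B w) + f'' w (deriv c t) + 2 • (DxG w + N (B w)) = 0
    rw [smul_add] at this
    linear_combination (norm := module) this
  -- derivative of A along c
  have hc' : HasDerivAt c (deriv c t) t :=
    ((hc.1.contDiffAt (hIopen.mem_nhds ht)).differentiableAt hone).hasDerivAt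
  have hAder : HasDerivAt (fun t' => fderiv ℝ Z (c t')) (f'' (deriv c t)) t :=
    hB'.comp_hasDerivAt t hc'
  -- differentiability of Nc along c
  have hNloc : (fun t' => Nc n G c t') =ᶠ[nhds t]
      (fun t' => (fderiv ℝ G (c t', deriv c t')).comp
        (ContinuousLinearMap.inr ℝ (En n) (En n))) := by
    filter_upwards [hIopen.mem_nhds ht] with s hs
    exact DyG_eq n G _ _ ((hGat (c s) (deriv c s) (hc.2.1 s hs)).differentiableAt hone)
  have hNdiff : DifferentiableAt ℝ (fun t' => Nc n G c t') t := by
    have hcd : ContDiffOn ℝ (⊤:ℕ∞) (deriv c) I := hc.1.deriv_of_isOpen hIopen htop1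
    have h1 : DifferentiableAt ℝ (fun t' => ((c t', deriv c t') : En n × En n)) t :=
      ((hc.1.contDiffAt (hIopen.mem_nhds ht)).differentiableAt hone).prodMk
        ((hcd.contDiffAt (hIopen.mem_nhds ht)).differentiableAt hone)
    have h2 : DifferentiableAt ℝ (fderiv ℝ G) (c t, deriv c t) :=
      (((hG.fderiv_of_isOpen hGopen htop1).contDiffAt
        (hGopen.mem_nhds hne)).differentiableAt hone)
    have h3 : DifferentiableAt ℝ
        (fun t' => (fderiv ℝ G (c t', deriv c t')).comp
          (ContinuousLinearMap.inr ℝ (En n) (En n))) t :=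
      (h2.comp t h1).clm_comp (differentiableAt_const _)
    exact h3.congr_of_eventuallyEq hNloc
  have hNder : HasDerivAt (fun t' => Nc n G c t') (deriv (fun t' => Nc n G c t') t) t :=
    hNdiff.hasDerivAt
  -- derivative of AZ ∘ c
  have hAeq : (fun t' => AZ n G Z (c t')) =ᶠ[nhds t]
      (fun t' => fderiv ℝ Z (c t') + Nc n G c t') := by
    filter_upwards [hIopen.mem_nhds ht] with s hs
    show AZ n G Z (c s) = _
    unfold AZ Nc
    rw [hZc s hs]
  have hAder2 : HasDerivAt (fun t' => AZ n G Z (c t'))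
      (f'' (deriv c t) + deriv (fun t' => Nc n G c t') t) t :=
    (hAder.add hNder).congr_of_eventuallyEq hAeq
  have hderivA : deriv (fun t' => AZ n G Z (c t')) t
      = f'' (deriv c t) + deriv (fun t' => Nc n G c t') t := hAder2.deriv
  have hA : AZ n G Z (c t) = B + Nc n G c t := by
    unfold AZ Nc
    rw [hZx₀, hBdef]
  rw [hderivA, hA]
  unfold Phi
  refine ContinuousLinearMap.ext fun w => ?_
  simp only [ContinuousLinearMap.add_apply, ContinuousLinearMap.sub_apply,
    ContinuousLinearMap.coe_comp', Function.comp_apply, ContinuousLinearMap.smul_apply,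
    ContinuousLinearMap.zero_apply]
  have hs1 : f'' (deriv c t) w = f'' w (deriv c t) := hsymm _ _
  rw [hs1, hkey w]
  simp only [map_add]
  module
end
end

section
/- Under the hypotheses of Proposition 4.7 (spray G on ℝⁿ with n ≥ 2; geodesic c : I → ℝⁿ; (n−1)-parameter geodesic variation V of c; parallel frame e₁,…,e_{n−1} with {c'(t), e_a(t)} a basis for all t and W_t = span{e_a(t)}; J determined by J(t)·c'(t) = 0 and J(t)·e_a(t) = ∂_{s^a}V(t,0,…,0); V restricted to I₀ × (−ε,ε)^{n−1} a diffeomorphism onto its open image U; J transversal with respect to (W_t) on I₀; Z : U → ℝⁿ the field with Z(V(t,s)) = ∂_tV(t,s)), let Ĵ(t) be the (n−1)×(n−1) matrix defined by J(t)·e_a(t) = Σ_b Ĵ(t)_{b a}·e_b(t) (well-defined since range J(t) ⊆ W_t). Then for all t ∈ I₀: d/dt det Ĵ(t) = trace(A_Z(c(t))) · det Ĵ(t). -/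
noncomputable section

section LiouvilleAux

open Matrix

/-- The determinant as a continuous multilinear map of the rows. -/
noncomputable def detCML (k : ℕ) : ContinuousMultilinearMap ℝ (fun _ : Fin k => (Fin k → ℝ)) ℝ :=
  (Matrix.detRowAlternating : ((Fin k → ℝ) [⋀^Fin k]→ₗ[ℝ] ℝ)).toMultilinearMap.mkContinuous
    (Fintype.card (Equiv.Perm (Fin k))) (by
      intro m
      show ‖(Matrix.of m).det‖ ≤ _
      rw [Matrix.det_apply]
      have hterm : ∀ σ : Equiv.Perm (Fin k),
          ‖Equiv.Perm.sign σ • ∏ i, Matrix.of m (σ i) i‖ ≤ ∏ i, ‖m i‖ := by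
        intro σ
        have h0 : ‖Equiv.Perm.sign σ • ∏ i, Matrix.of m (σ i) i‖ = ‖∏ i, m (σ i) i‖ := by
          rcases Int.units_eq_one_or (Equiv.Perm.sign σ) with h | h <;> simp [h, Units.smul_def]
        rw [h0]
        calc ‖∏ i, m (σ i) i‖ ≤ ∏ i, ‖m (σ i) i‖ := by
              simpa using norm_prod_le' Finset.univ (fun i _ => True.intro) (fun i => m (σ i) i)
          _ ≤ ∏ i, ‖m (σ i)‖ := by
              apply Finset.prod_le_prod (fun i _ => norm_nonneg _)
              intro i _
              exact norm_le_pi_norm (m (σ i)) i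
          _ = ∏ i, ‖m i‖ := Equiv.prod_comp σ (fun i => ‖m i‖)
      calc ‖∑ σ : Equiv.Perm (Fin k), Equiv.Perm.sign σ • ∏ i, Matrix.of m (σ i) i‖
          ≤ ∑ σ : Equiv.Perm (Fin k), ‖Equiv.Perm.sign σ • ∏ i, Matrix.of m (σ i) i‖ :=
            norm_sum_le _ _
        _ ≤ ∑ _σ : Equiv.Perm (Fin k), ∏ i, ‖m i‖ := Finset.sum_le_sum fun σ _ => hterm σ
        _ = (Fintype.card (Equiv.Perm (Fin k))) * ∏ i, ‖m i‖ := by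
            rw [Finset.sum_const, Finset.card_univ, nsmul_eq_mul])

theorem detCML_apply {k : ℕ} (m : Fin k → Fin k → ℝ) : detCML k m = (Matrix.of m).det := rfl

/-- Derivative of the determinant of a one-parameter family of matrices. -/
theorem hasDerivAt_det {k : ℕ} {A : ℝ → Fin k → Fin k → ℝ} {A' : Fin k → Fin k → ℝ} {t₀ : ℝ}
    (h : HasDerivAt A A' t₀) :
    HasDerivAt (fun t => (Matrix.of (A t)).det)
      (∑ i, ((Matrix.of (A t₀)).updateRow i (A' i)).det) t₀ := by
  have hf := (detCML k).hasFDerivAt (A t₀)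
  have hc := hf.comp_hasDerivAt t₀ h
  have h2 : (detCML k).linearDeriv (A t₀) A'
      = ∑ i, ((Matrix.of (A t₀)).updateRow i (A' i)).det := by
    rw [ContinuousMultilinearMap.linearDeriv_apply]
    congr 1
  simp only [Function.comp_def, detCML_apply] at hc
  simpa [h2] using hc

theorem sum_det_updateRow {k : ℕ} (A B : Matrix (Fin k) (Fin k) ℝ) :
    ∑ i, (A.updateRow i (B i)).det = Matrix.trace (B * A.adjugate) := by
  have h : ∀ i, (A.updateRow i (B i)).det = ∑ j, B i j * A.adjugate j i := by
    intro i
    have h1 : (A.updateRow i (B i)).det = ((A.updateRow i (B i))ᵀ).det :=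
      (Matrix.det_transpose _).symm
    have h2 : (A.updateRow i (B i))ᵀ = Aᵀ.updateCol i (B i) := by
      rw [← Matrix.updateCol_transpose]
    rw [h1, h2, ← Matrix.cramer_apply, Matrix.cramer_eq_adjugate_mulVec]
    rw [← Matrix.adjugate_transpose]
    simp [Matrix.mulVec, dotProduct, Matrix.transpose_apply, mul_comm]
  simp only [h, Matrix.trace, Matrix.diag, Matrix.mul_apply]

theorem cube_isOpen (k : ℕ) (ε : ℝ) : IsOpen (cube k ε) := by
  have h : cube k ε = ⋂ i, {s : Fin k → ℝ | |s i| < ε} := by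
    ext s; simp [cube, Set.mem_iInter]
  rw [h]
  exact isOpen_iInter_of_finite fun i =>
    isOpen_lt ((continuous_apply i).abs) continuous_const

theorem zero_mem_cube {k : ℕ} {ε : ℝ} (hε : 0 < ε) : (0 : Fin k → ℝ) ∈ cube k ε := by
  intro i; simpa using hε

/-- Euler's relation for a spray: `D_yG(x,y)·y = 2·G(x,y)`. -/
theorem euler_spray (n : ℕ) (G : En n × En n → En n) (hG : IsSpray n G) (x y : En n)
    (hy : y ≠ 0) : DyG n G x y y = (2 : ℝ) • G (x, y) := by
  have hone : ((⊤ : ℕ∞) : WithTop ℕ∞) ≠ 0 := by simp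
  have hOpen : IsOpen {p : En n × En n | p.2 ≠ 0} := by
    have h : {p : En n × En n | p.2 ≠ 0} = (Prod.snd) ⁻¹' {(0 : En n)}ᶜ := rfl
    rw [h]; exact (isOpen_compl_singleton).preimage continuous_snd
  have hmem : (x, y) ∈ {p : En n × En n | p.2 ≠ 0} := hy
  have hGd : HasFDerivAt G (fderiv ℝ G (x, y)) (x, y) :=
    ((hG.1.contDiffAt (hOpen.mem_nhds hmem)).differentiableAt hone).hasFDerivAt
  have hpart : HasFDerivAt (fun y' => G (x, y'))
      ((fderiv ℝ G (x, y)).comp (ContinuousLinearMap.inr ℝ (En n) (En n))) y :=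
    hGd.comp y (hasFDerivAt_prodMk_right x y)
  have hDyG : DyG n G x y
      = (fderiv ℝ G (x, y)).comp (ContinuousLinearMap.inr ℝ (En n) (En n)) := hpart.fderiv
  have hsc : HasDerivAt (fun l : ℝ => l • y) y 1 := by
    simpa using (hasDerivAt_id (1 : ℝ)).smul_const y
  have hpart1 : HasFDerivAt (fun y' => G (x, y'))
      ((fderiv ℝ G (x, y)).comp (ContinuousLinearMap.inr ℝ (En n) (En n))) ((1 : ℝ) • y) := by
    rw [one_smul]; exact hpart
  have hφ : HasDerivAt (fun l : ℝ => G (x, l • y)) (DyG n G x y y) 1 := by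
    have h2 := hpart1.comp_hasDerivAt (1 : ℝ) hsc
    rw [hDyG]
    exact h2
  have hψ : HasDerivAt (fun l : ℝ => l ^ 2 • G (x, y)) ((2 : ℝ) • G (x, y)) 1 := by
    have h1 : HasDerivAt (fun l : ℝ => l ^ 2) 2 1 := by
      simpa using (hasDerivAt_pow 2 (1 : ℝ))
    simpa using h1.smul_const (G (x, y))
  have heq : (fun l : ℝ => G (x, l • y)) =ᶠ[nhds 1] (fun l => l ^ 2 • G (x, y)) := by
    filter_upwards [isOpen_Ioi.mem_nhds (by norm_num : (1 : ℝ) ∈ Set.Ioi (0 : ℝ))] with l hl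
    exact hG.2 x y hy l hl
  have hd := heq.deriv_eq
  rw [hφ.deriv, hψ.deriv] at hd
  exact hd

end LiouvilleAux

set_option maxHeartbeats 2000000 in
/-- Proposition 4.7, equation (eq:J2), in coordinates (a Liouville-type formula): if
`Ĵ(t) = M t` is the transverse matrix of `J` in the parallel frame `e`, then
`d/dt det Ĵ = trace(A_Z(c(t))) · det Ĵ` on `I₀`. -/
theorem transverse_determinant_liouville (n : ℕ) (hn : 2 ≤ n)
    (G : En n × En n → En n) (hG : IsSpray n G)
    (I : Set ℝ) (hIopen : IsOpen I) (hIconn : I.OrdConnected)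
    (c : ℝ → En n) (hc : IsGeodesicOn n G c I)
    (ε : ℝ) (hε : 0 < ε) (V : ℝ × (Fin (n - 1) → ℝ) → En n)
    (hV : IsGeodesicVariation n G c I (n - 1) ε V)
    (e : Fin (n - 1) → ℝ → En n) (he : IsParallelFrame n (n - 1) G c I e)
    (J : ℝ → En n →L[ℝ] En n)
    (hJc : ∀ t ∈ I, J t (deriv c t) = 0)
    (hJe : ∀ t ∈ I, ∀ a, J t (e a t) = dS n (n - 1) V a t)
    (I₀ : Set ℝ) (hI₀open : IsOpen I₀) (hI₀conn : I₀.OrdConnected) (hI₀sub : I₀ ⊆ I)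
    (hVinj : Set.InjOn V (I₀ ×ˢ cube (n - 1) ε))
    (hVopen : IsOpen (V '' (I₀ ×ˢ cube (n - 1) ε)))
    (g : En n → ℝ × (Fin (n - 1) → ℝ))
    (hg : ContDiffOn ℝ (⊤ : ℕ∞) g (V '' (I₀ ×ˢ cube (n - 1) ε)))
    (hgV : ∀ p ∈ I₀ ×ˢ cube (n - 1) ε, g (V p) = p)
    (htrans : ∀ t ∈ I₀, ∀ x, J t x ∈ Wspan n (n - 1) e t)
    (Z : En n → En n)
    (hZ : ∀ p ∈ I₀ ×ˢ cube (n - 1) ε, Z (V p) = deriv (fun t' => V (t', p.2)) p.1)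
    (M : ℝ → Matrix (Fin (n - 1)) (Fin (n - 1)) ℝ)
    (hM : ∀ t ∈ I₀, ∀ a, J t (e a t) = ∑ b, M t b a • e b t) :
    ∀ t ∈ I₀,
      deriv (fun t' => (M t').det) t
        = LinearMap.trace ℝ (En n) ((AZ n G Z (c t)).toLinearMap) * (M t).det := by
  classical
  intro t₀ ht₀
  have hone : ((⊤ : ℕ∞) : WithTop ℕ∞) ≠ 0 := by simp
  have htopp : ((⊤ : ℕ∞) : WithTop ℕ∞) + 1 ≤ ((⊤ : ℕ∞) : WithTop ℕ∞) := by
    exact_mod_cast le_top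
  have ht₀I : t₀ ∈ I := hI₀sub ht₀
  have hm1 : n - 1 + 1 = n := by omega
  -- the index equivalence
  set q : Fin n ≃ Option (Fin (n - 1)) := (finCongr hm1.symm).trans (finSuccEquiv (n - 1))
    with hq
  -- open sets and memberships
  have hΩopen : IsOpen (I ×ˢ cube (n - 1) ε) := hIopen.prod (cube_isOpen _ _)
  have hΩ₀open : IsOpen (I₀ ×ˢ cube (n - 1) ε) := hI₀open.prod (cube_isOpen _ _)
  have hΩsub : (I₀ ×ˢ cube (n - 1) ε) ⊆ (I ×ˢ cube (n - 1) ε) :=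
    Set.prod_mono_left hI₀sub
  have hcube0 : (0 : Fin (n - 1) → ℝ) ∈ cube (n - 1) ε := zero_mem_cube hε
  have hmemΩ : (t₀, (0 : Fin (n - 1) → ℝ)) ∈ I ×ˢ cube (n - 1) ε := ⟨ht₀I, hcube0⟩
  have hmemΩ₀ : (t₀, (0 : Fin (n - 1) → ℝ)) ∈ I₀ ×ˢ cube (n - 1) ε := ⟨ht₀, hcube0⟩
  -- basic facts about V
  have hVsm : ContDiffOn ℝ ((⊤ : ℕ∞)) V (I ×ˢ cube (n - 1) ε) := hV.1
  have hVc : ∀ t ∈ I, V (t, 0) = c t := hV.2.1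
  set F : ℝ × (Fin (n - 1) → ℝ) → (ℝ × (Fin (n - 1) → ℝ)) →L[ℝ] En n := fderiv ℝ V with hF
  have hFd : ∀ p ∈ I ×ˢ cube (n - 1) ε, HasFDerivAt V (F p) p := fun p hp =>
    ((hVsm.contDiffAt (hΩopen.mem_nhds hp)).differentiableAt hone).hasFDerivAt
  have hFsm : ContDiffOn ℝ ((⊤ : ℕ∞)) F (I ×ˢ cube (n - 1) ε) :=
    hVsm.fderiv_of_isOpen hΩopen htopp
  have hF2 : HasFDerivAt F (fderiv ℝ F (t₀, 0)) (t₀, 0) :=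
    ((hFsm.contDiffAt (hΩopen.mem_nhds hmemΩ)).differentiableAt hone).hasFDerivAt
  set F'' := fderiv ℝ F (t₀, 0) with hF''
  have hsymm : ∀ v w, F'' v w = F'' w v := by
    intro v w
    have hev : ∀ᶠ p in nhds ((t₀, (0 : Fin (n - 1) → ℝ))), HasFDerivAt V (F p) p := by
      filter_upwards [hΩopen.mem_nhds hmemΩ] with p hp using hFd p hp
    exact second_derivative_symmetric_of_eventually hev hF2 v w
  -- the variation fields j a
  set j : Fin (n - 1) → ℝ → En n := fun a t => F (t, 0) (0, Pi.single a 1) with hj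
  have hjJ : ∀ t ∈ I, ∀ a, J t (e a t) = j a t := by
    intro t ht a
    rw [hJe t ht a]
    have h1 : HasFDerivAt (fun s => V (t, s))
        ((F (t, 0)).comp (ContinuousLinearMap.inr ℝ ℝ (Fin (n - 1) → ℝ))) 0 :=
      (hFd (t, 0) ⟨ht, hcube0⟩).comp 0 (hasFDerivAt_prodMk_right t 0)
    show fderiv ℝ (fun s => V (t, s)) 0 (Pi.single a 1) = _
    rw [h1.fderiv]
    rfl
  have hjd : ∀ a, HasDerivAt (j a) (F'' (1, 0) (0, Pi.single a 1)) t₀ := by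
    intro a
    have h1 : HasDerivAt (fun t : ℝ => (t, (0 : Fin (n - 1) → ℝ)))
        ((1 : ℝ), (0 : Fin (n - 1) → ℝ)) t₀ :=
      (hasDerivAt_id t₀).prodMk (hasDerivAt_const t₀ 0)
    have h2 : HasDerivAt (fun t : ℝ => F (t, 0)) (F'' (1, 0)) t₀ := by
      have := hF2.comp_hasDerivAt t₀ h1
      simpa [Function.comp_def] using this
    have h3 := (ContinuousLinearMap.apply ℝ (En n)
      ((0 : ℝ), Pi.single a 1)).hasFDerivAt.comp_hasDerivAt t₀ h2
    simpa [Function.comp_def] using h3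
  -- Z in terms of F and g
  have hcV : c t₀ = V (t₀, 0) := (hVc t₀ ht₀I).symm
  have hcU : c t₀ ∈ V '' (I₀ ×ˢ cube (n - 1) ε) := ⟨(t₀, 0), hmemΩ₀, hcV.symm⟩
  have hZrep : ∀ x ∈ V '' (I₀ ×ˢ cube (n - 1) ε), Z x = F (g x) (1, 0) := by
    rintro x ⟨p, hp, rfl⟩
    rw [hZ p hp, hgV p hp]
    have h1 : HasDerivAt (fun t' => V (t', p.2)) (F p (1, 0)) p.1 := by
      have h0 : HasDerivAt (fun t' : ℝ => (t', p.2)) ((1 : ℝ), (0 : Fin (n - 1) → ℝ)) p.1 :=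
        (hasDerivAt_id p.1).prodMk (hasDerivAt_const p.1 p.2)
      have h2 := (hFd p (hΩsub hp)).comp_hasDerivAt p.1 (by simpa using h0)
      simpa [Function.comp_def] using h2
    exact h1.deriv
  have hgd : HasFDerivAt g (fderiv ℝ g (c t₀)) (c t₀) :=
    ((hg.contDiffAt (hVopen.mem_nhds hcU)).differentiableAt hone).hasFDerivAt
  set Dg := fderiv ℝ g (c t₀) with hDg
  have hgc : g (c t₀) = (t₀, 0) := by rw [hcV]; exact hgV _ hmemΩ₀
  have hF2' : HasFDerivAt F F'' (g (c t₀)) := by rw [hgc]; exact hF2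
  have hZd : HasFDerivAt Z (((ContinuousLinearMap.apply ℝ (En n)
      ((1 : ℝ), (0 : Fin (n - 1) → ℝ))).comp F'').comp Dg) (c t₀) := by
    have h1 := ((ContinuousLinearMap.apply ℝ (En n)
      ((1 : ℝ), (0 : Fin (n - 1) → ℝ))).hasFDerivAt.comp (c t₀) (hF2'.comp (c t₀) hgd))
    have h2 : Z =ᶠ[nhds (c t₀)] (fun x => F (g x) (1, 0)) := by
      filter_upwards [hVopen.mem_nhds hcU] with x hx using hZrep x hx
    exact (h1.congr_of_eventuallyEq h2)
  have hfz : fderiv ℝ Z (c t₀) = ((ContinuousLinearMap.apply ℝ (En n)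
      ((1 : ℝ), (0 : Fin (n - 1) → ℝ))).comp F'').comp Dg := hZd.fderiv
  -- Dg inverts F (t₀, 0)
  have hDgF : ∀ w, Dg (F (t₀, 0) w) = w := by
    have hgd' : HasFDerivAt g Dg (V (t₀, 0)) := by rw [← hcV]; exact hgd
    have hcomp : HasFDerivAt (g ∘ V) (Dg.comp (F (t₀, 0))) (t₀, 0) :=
      hgd'.comp (t₀, 0) (hFd (t₀, 0) hmemΩ)
    have hid : g ∘ V =ᶠ[nhds ((t₀, (0 : Fin (n - 1) → ℝ)))] id := by
      filter_upwards [hΩ₀open.mem_nhds hmemΩ₀] with p hp using hgV p hp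
    have h1 : HasFDerivAt (g ∘ V)
        (ContinuousLinearMap.id ℝ (ℝ × (Fin (n - 1) → ℝ))) (t₀, 0) :=
      (hasFDerivAt_id _).congr_of_eventuallyEq hid
    have h2 := hcomp.unique h1
    intro w
    have h3 := DFunLike.congr_fun h2 w
    simpa using h3
  -- the key commutation identity
  have hstar : ∀ a, deriv (j a) t₀ = fderiv ℝ Z (c t₀) (j a t₀) := by
    intro a
    rw [(hjd a).deriv, hfz]
    have h1 : Dg (j a t₀) = ((0 : ℝ), Pi.single a 1) := hDgF _
    simp only [ContinuousLinearMap.comp_apply, ContinuousLinearMap.apply_apply, h1]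
    exact hsymm (1, 0) (0, Pi.single a 1)
  -- Z along c
  have hZc : ∀ t ∈ I₀, Z (c t) = deriv c t := by
    intro t ht
    have h1 := hZ (t, 0) ⟨ht, hcube0⟩
    rw [hVc t (hI₀sub ht)] at h1
    rw [h1]
    apply Filter.EventuallyEq.deriv_eq
    filter_upwards [hIopen.mem_nhds (hI₀sub ht)] with t' ht' using hVc t' ht'
  have hc1 : HasDerivAt c (deriv c t₀) t₀ :=
    ((hc.1.contDiffAt (hIopen.mem_nhds ht₀I)).differentiableAt hone).hasDerivAt
  have hAc : fderiv ℝ Z (c t₀) (deriv c t₀) = deriv (deriv c) t₀ := by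
    have h1 : HasDerivAt (fun t => Z (c t)) (fderiv ℝ Z (c t₀) (deriv c t₀)) t₀ :=
      (hZd.differentiableAt.hasFDerivAt).comp_hasDerivAt t₀ hc1
    have h2 : (fun t => Z (c t)) =ᶠ[nhds t₀] deriv c := by
      filter_upwards [hI₀open.mem_nhds ht₀] with t ht using hZc t ht
    rw [← h1.deriv]
    exact h2.deriv_eq
  -- A = AZ at c t₀, and A (c' t₀) = 0
  have hA0 : (AZ n G Z (c t₀)) (deriv c t₀) = 0 := by
    have h1 : (AZ n G Z (c t₀)) (deriv c t₀)
        = fderiv ℝ Z (c t₀) (deriv c t₀)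
          + DyG n G (c t₀) (deriv c t₀) (deriv c t₀) := by
      show (fderiv ℝ Z (c t₀) + DyG n G (c t₀) (Z (c t₀))) (deriv c t₀) = _
      rw [hZc t₀ ht₀]
      rfl
    rw [h1, hAc, euler_spray n G hG _ _ (hc.2.1 t₀ ht₀I)]
    exact hc.2.2 t₀ ht₀I
  -- the frame, indexed over `Option (Fin (n-1))`
  set v : ℝ → Option (Fin (n - 1)) → En n :=
    fun t o => o.elim (deriv c t) (fun a => e a t) with hv
  have hframe : ∀ t ∈ I, LinearIndependent ℝ (fun i : Fin n => v t (q i)) ∧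
      ⊤ ≤ Submodule.span ℝ (Set.range (fun i : Fin n => v t (q i))) := by
    intro t ht
    obtain ⟨hli, hsp⟩ := he.2 t ht
    refine ⟨hli.comp q q.injective, ?_⟩
    have hr : Set.range (fun i : Fin n => v t (q i)) = Set.range (v t) :=
      q.surjective.range_comp (v t)
    rw [hr, hv]
    exact le_of_eq hsp.symm
  -- the frame matrix
  set Ent : ℝ → Fin n → Fin n → ℝ := fun t i jj => v t (q jj) i with hEnt
  have hdetU : ∀ t ∈ I, IsUnit ((Matrix.of (Ent t)).det) := by
    intro t ht
    obtain ⟨hli, hsp⟩ := hframe t ht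
    have h1 := (Pi.basisFun ℝ (Fin n)).isUnit_det (Module.Basis.mk hli hsp)
    have h2 : (Pi.basisFun ℝ (Fin n)).det ⇑(Module.Basis.mk hli hsp) = (Matrix.of (Ent t)).det := by
      rw [Pi.basisFun_det]
      have h4 : ⇑(Module.Basis.mk hli hsp) = fun i j => Ent t j i := by
        rw [Module.Basis.coe_mk]
      have h3 : (Matrix.detRowAlternating : ((Fin n → ℝ) [⋀^Fin n]→ₗ[ℝ] ℝ)) ⇑(Module.Basis.mk hli hsp)
          = ((Matrix.of (Ent t)).transpose).det := by
        rw [h4]; rfl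
      rw [h3, Matrix.det_transpose]
    rwa [h2] at h1
  -- the explicit formula for M
  have hMf : ∀ t ∈ I₀, ∀ a b, M t b a
      = (Matrix.mulVec (Matrix.of (Ent t))⁻¹ (j a t)) (q.symm (some b)) := by
    intro t ht a b
    set w : Fin n → ℝ := fun i => (q i).elim 0 (fun b' => M t b' a) with hw
    have hsum : j a t = ∑ b', M t b' a • e b' t := by
      rw [← hjJ t (hI₀sub ht) a]
      exact hM t ht a
    have claim1 : Matrix.mulVec (Matrix.of (Ent t)) w = j a t := by
      funext i
      have h0 : (Matrix.mulVec (Matrix.of (Ent t)) w) i = ∑ jj, Ent t i jj * w jj := by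
        simp [Matrix.mulVec, dotProduct]
      rw [h0]
      rw [Fintype.sum_equiv q (fun jj => Ent t i jj * w jj)
        (fun o => ((o.elim (deriv c t) (fun a' => e a' t)) i) * (o.elim 0 (fun b' => M t b' a)))
        (fun jj => by simp [hEnt, hw, hv])]
      rw [Fintype.sum_option]
      rw [hsum]
      simp [Finset.sum_apply, mul_comm]
    have hunit := hdetU t (hI₀sub ht)
    have claim2 : Matrix.mulVec (Matrix.of (Ent t))⁻¹ (j a t) = w := by
      rw [← claim1, Matrix.mulVec_mulVec, Matrix.nonsing_inv_mul _ hunit, Matrix.one_mulVec]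
    rw [claim2, hw]
    simp
  -- differentiability of the frame matrix and of M
  have hdc : DifferentiableAt ℝ (deriv c) t₀ :=
    ((hc.1.deriv_of_isOpen hIopen htopp).contDiffAt (hIopen.mem_nhds ht₀I)).differentiableAt hone
  have hed : ∀ b, DifferentiableAt ℝ (e b) t₀ := fun b =>
    ((he.1 b).1.contDiffAt (hIopen.mem_nhds ht₀I)).differentiableAt hone
  have hent_d : DifferentiableAt ℝ (fun t => Ent t) t₀ := by
    rw [differentiableAt_pi]
    intro i
    rw [differentiableAt_pi]
    intro jj
    rcases hqj : q jj with _ | a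
    · have h : (fun t => Ent t i jj) = fun t => deriv c t i := by
        funext t; simp [hEnt, hv, hqj]
      rw [h]
      exact (differentiableAt_pi.mp hdc) i
    · have h : (fun t => Ent t i jj) = fun t => e a t i := by
        funext t; simp [hEnt, hv, hqj]
      rw [h]
      exact (differentiableAt_pi.mp (hed a)) i
  have hdet_d : DifferentiableAt ℝ (fun t => (Matrix.of (Ent t)).det) t₀ :=
    (hasDerivAt_det hent_d.hasDerivAt).differentiableAt
  have hadj_d : ∀ i jj, DifferentiableAt ℝ (fun t => (Matrix.of (Ent t)).adjugate i jj) t₀ := by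
    intro i jj
    have h1 : ∀ t, (Matrix.of (Ent t)).adjugate i jj
        = (Matrix.of (Function.update (Ent t) jj (Pi.single i (1 : ℝ)))).det := by
      intro t
      rw [Matrix.adjugate_apply]
      rfl
    simp only [h1]
    have h2 : DifferentiableAt ℝ (fun t => Function.update (Ent t) jj (Pi.single i (1 : ℝ))) t₀ := by
      rw [differentiableAt_pi]
      intro r
      by_cases hr : r = jj
      · subst hr
        have h : (fun t => Function.update (Ent t) r (Pi.single i (1 : ℝ)) r)
            = fun _ => Pi.single i (1 : ℝ) := by
          funext t; simp
        rw [h]; exact differentiableAt_const _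
      · have h : (fun t => Function.update (Ent t) jj (Pi.single i (1 : ℝ)) r)
            = fun t => Ent t r := by
          funext t; simp [Function.update_apply, hr]
        rw [h]
        exact differentiableAt_pi.mp hent_d r
    exact (hasDerivAt_det h2.hasDerivAt).differentiableAt
  have hdet0 : ((Matrix.of (Ent t₀)).det) ≠ 0 := (hdetU t₀ ht₀I).ne_zero
  have hinv_d : ∀ i jj, DifferentiableAt ℝ (fun t => (Matrix.of (Ent t))⁻¹ i jj) t₀ := by
    intro i jj
    have h1 : ∀ t, (Matrix.of (Ent t))⁻¹ i jj
        = ((Matrix.of (Ent t)).det)⁻¹ * (Matrix.of (Ent t)).adjugate i jj := by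
      intro t
      rw [Matrix.inv_def, Ring.inverse_eq_inv]
      simp [Matrix.smul_apply, smul_eq_mul]
    simp only [h1]
    exact (hdet_d.inv hdet0).mul (hadj_d i jj)
  have hja_d : ∀ a (i : Fin n), DifferentiableAt ℝ (fun t => j a t i) t₀ := fun a i =>
    differentiableAt_pi.mp (hjd a).differentiableAt i
  have hMdd : ∀ b a, DifferentiableAt ℝ (fun t => M t b a) t₀ := by
    intro b a
    have h1 : (fun t => M t b a) =ᶠ[nhds t₀]
        (fun t => ∑ jj, (Matrix.of (Ent t))⁻¹ (q.symm (some b)) jj * j a t jj) := by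
      filter_upwards [hI₀open.mem_nhds ht₀] with t ht
      rw [hMf t ht a b]
      simp [Matrix.mulVec, dotProduct]
    rw [h1.differentiableAt_iff]
    exact DifferentiableAt.fun_sum (fun jj _ => (hinv_d _ jj).mul (hja_d a jj))
  -- the derivative of j a via the frame expansion
  have hjda : ∀ a, HasDerivAt (j a)
      (∑ b, (M t₀ b a • deriv (e b) t₀ + deriv (fun t => M t b a) t₀ • e b t₀)) t₀ := by
    intro a
    have hsum : HasDerivAt (fun t => ∑ b, M t b a • e b t)
        (∑ b, (M t₀ b a • deriv (e b) t₀ + deriv (fun t => M t b a) t₀ • e b t₀)) t₀ :=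
      HasDerivAt.fun_sum fun b _ => ((hMdd b a).hasDerivAt.smul (hed b).hasDerivAt)
    have hjeq : j a =ᶠ[nhds t₀] (fun t => ∑ b, M t b a • e b t) := by
      filter_upwards [hI₀open.mem_nhds ht₀] with t ht
      rw [← hjJ t (hI₀sub ht) a]
      exact hM t ht a
    exact hsum.congr_of_eventuallyEq hjeq
  -- the key matrix relation
  have hkey : ∀ a, (∑ b, deriv (fun t => M t b a) t₀ • e b t₀)
      = ∑ b, M t₀ b a • (AZ n G Z (c t₀)) (e b t₀) := by
    intro a
    have hjat : j a t₀ = ∑ b, M t₀ b a • e b t₀ := by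
      rw [← hjJ t₀ ht₀I a]; exact hM t₀ ht₀ a
    have hpar : ∀ b, deriv (e b) t₀ = -(Nc n G c t₀ (e b t₀)) := fun b =>
      eq_neg_of_add_eq_zero_left ((he.1 b).2 t₀ ht₀I)
    have h1 : (AZ n G Z (c t₀)) (j a t₀)
        = deriv (j a) t₀ + (Nc n G c t₀) (j a t₀) := by
      show (fderiv ℝ Z (c t₀) + DyG n G (c t₀) (Z (c t₀))) (j a t₀) = _
      rw [ContinuousLinearMap.add_apply, hstar a, hZc t₀ ht₀]
      rfl
    have h2 : (AZ n G Z (c t₀)) (j a t₀)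
        = ∑ b, M t₀ b a • (AZ n G Z (c t₀)) (e b t₀) := by
      rw [hjat, map_sum]
      simp only [ContinuousLinearMap.map_smul]
    rw [← h2, h1, (hjda a).deriv, hjat, map_sum]
    simp only [ContinuousLinearMap.map_smul, hpar, smul_neg]
    rw [← Finset.sum_add_distrib]
    apply Finset.sum_congr rfl
    intro b _
    abel
  -- the basis at t₀
  obtain ⟨hliB, hspB⟩ := hframe t₀ ht₀I
  set B : Module.Basis (Fin n) ℝ (En n) := Module.Basis.mk hliB hspB with hB
  have hBcoe : ∀ i, B i = v t₀ (q i) := by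
    intro i
    rw [hB]
    exact congrFun (Module.Basis.coe_mk hliB hspB) i
  have hBnone : B (q.symm none) = deriv c t₀ := by
    rw [hBcoe, Equiv.apply_symm_apply, hv]
    rfl
  have hBsome : ∀ d, B (q.symm (some d)) = e d t₀ := by
    intro d; rw [hBcoe, Equiv.apply_symm_apply, hv]; rfl
  -- the transverse matrix of AZ
  set Ah : Matrix (Fin (n - 1)) (Fin (n - 1)) ℝ :=
    Matrix.of (fun d b => (B.repr ((AZ n G Z (c t₀)) (e b t₀))) (q.symm (some d))) with hAh
  have hrepr : ∀ (w : Fin (n - 1) → ℝ) (d : Fin (n - 1)),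
      (B.repr (∑ b, w b • e b t₀)) (q.symm (some d)) = w d := by
    intro w d
    have h1 : (∑ b, w b • e b t₀) = ∑ b, w b • B (q.symm (some b)) := by
      simp [hBsome]
    rw [h1, map_sum]
    simp only [map_smul, Module.Basis.repr_self, Finsupp.coe_finset_sum, Finset.sum_apply,
      Finsupp.coe_smul, Pi.smul_apply, Finsupp.single_apply, smul_eq_mul,
      EmbeddingLike.apply_eq_iff_eq, Option.some.injEq]
    simp [Finset.sum_ite_eq]
  have hM'A : (Matrix.of (fun b a => deriv (fun t => M t b a) t₀)
      : Matrix (Fin (n - 1)) (Fin (n - 1)) ℝ) = Ah * M t₀ := by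
    ext d a
    have h2 := congrArg (fun z => (B.repr z) (q.symm (some d))) (hkey a)
    beta_reduce at h2
    rw [hrepr] at h2
    rw [map_sum] at h2
    simp only [map_smul, Finsupp.coe_finset_sum, Finset.sum_apply, Finsupp.coe_smul,
      Pi.smul_apply, smul_eq_mul] at h2
    rw [Matrix.mul_apply]
    simp only [Matrix.of_apply]
    rw [h2]
    apply Finset.sum_congr rfl
    intro b _
    rw [mul_comm]
    rfl
  -- trace identification
  have htr : LinearMap.trace ℝ (En n) ((AZ n G Z (c t₀)).toLinearMap) = Matrix.trace Ah := by
    rw [LinearMap.trace_eq_matrix_trace ℝ B]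
    simp only [Matrix.trace]
    have h1 : ∑ i, (LinearMap.toMatrix B B ((AZ n G Z (c t₀)).toLinearMap)).diag i
        = ∑ o : Option (Fin (n - 1)),
          (LinearMap.toMatrix B B ((AZ n G Z (c t₀)).toLinearMap)).diag (q.symm o) :=
      Fintype.sum_equiv q _ _ (fun i => by rw [Equiv.symm_apply_apply])
    rw [h1, Fintype.sum_option]
    have h2 : (LinearMap.toMatrix B B ((AZ n G Z (c t₀)).toLinearMap)).diag (q.symm none)
        = 0 := by
      simp only [Matrix.diag, LinearMap.toMatrix_apply, hBnone]
      simp [hA0]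
    have h3 : ∀ d, (LinearMap.toMatrix B B ((AZ n G Z (c t₀)).toLinearMap)).diag
        (q.symm (some d)) = Ah d d := by
      intro d
      simp only [Matrix.diag, LinearMap.toMatrix_apply, hBsome]
      rfl
    rw [h2]
    simp only [h3]
    simp [Matrix.diag]
  -- final computation
  have hMder : HasDerivAt (fun t => (fun b a => M t b a))
      (fun b a => deriv (fun t => M t b a) t₀) t₀ :=
    hasDerivAt_pi.mpr fun b => hasDerivAt_pi.mpr fun a => (hMdd b a).hasDerivAt
  have hdet := hasDerivAt_det hMder
  have hfun : (fun t' => (M t').det)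
      = (fun t => (Matrix.of (fun b a => M t b a)).det) := rfl
  rw [hfun, hdet.deriv]
  have hstep : ∑ i, ((Matrix.of (fun b a => M t₀ b a)).updateRow i
        ((fun b a => deriv (fun t => M t b a) t₀) i)).det
      = Matrix.trace ((Matrix.of (fun b a => deriv (fun t => M t b a) t₀) :
          Matrix (Fin (n - 1)) (Fin (n - 1)) ℝ) * (Matrix.of (fun b a => M t₀ b a)).adjugate) :=
    sum_det_updateRow _ _
  rw [hstep, hM'A]
  have hof : (Matrix.of (fun b a => M t₀ b a) : Matrix (Fin (n - 1)) (Fin (n - 1)) ℝ)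
      = M t₀ := rfl
  rw [hof, Matrix.mul_assoc, Matrix.mul_adjugate, Matrix.mul_smul, Matrix.mul_one,
    Matrix.trace_smul, htr, smul_eq_mul]
  exact mul_comm _ _
end
end
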